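/- arXiv:1105.2404 — 3 statements merged into one kernel-verified Lean document; each statement's English description precedes it below -/
import Mathlib

section
/- Let 2 ≤ k < n ≤ m be integers and let F be a graph with a cut-edge e such that the two components of F − e are G = K_n and H = K_m. Then γ_{×k,t}(F_I) = k(n+m) + 1 if k is odd and n ≡ m+1 (mod 2), and γ_{×k,t}(F_I) = k(n+m) otherwise. -/
open SimpleGraph

/-- The inflated graph `G_I` of a graph `G`: its vertices are the darts (oriented edges) of
`G`; the darts with first coordinate `x` form the clique `X_x` (of size `deg x`), and each
edge `xy` of `G` gives the "blue" edge between the dart `(x,y)` and its reverse `(y,x)`;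
these blue edges form a perfect matching.  Equivalently, `inflation G` is the line graph of
the subdivision of `G`. -/
def inflation {V : Type*} (G : SimpleGraph V) : SimpleGraph G.Dart :=
  SimpleGraph.fromRel (fun d₁ d₂ => d₁.toProd.1 = d₂.toProd.1 ∨ d₁.toProd = d₂.toProd.swap)

/-- `S` is a `k`-tuple total dominating set of `H`: every vertex has at least `k`
neighbours in `S`. -/
def IsKTDS {W : Type*} (H : SimpleGraph W) (k : ℕ) (S : Set W) : Prop :=
  ∀ v : W, k ≤ (S ∩ H.neighborSet v).ncard

/-- The `k`-tuple total domination number of `H`: the minimum cardinality of a `k`-tuple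
total dominating set. -/
noncomputable def ktdn {W : Type*} (H : SimpleGraph W) (k : ℕ) : ℕ :=
  sInf {n | ∃ S : Set W, IsKTDS H k S ∧ S.ncard = n}

/-- `H` is a 2-factor of `G`: a spanning 2-regular subgraph of `G`, i.e. a vertex-disjoint
union of cycles covering all vertices. -/
def IsTwoFactor {V : Type*} (G H : SimpleGraph V) : Prop :=
  H ≤ G ∧ ∀ v : V, (H.neighborSet v).ncard = 2

/-- `G` is a `k`-Hamiltonian-like decomposable graph (kHLD-graph): `G` contains `k`
pairwise edge-disjoint 2-factors. -/
def IsKHLD {V : Type*} (G : SimpleGraph V) (k : ℕ) : Prop :=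
  ∃ F : Fin k → SimpleGraph V, (∀ i, IsTwoFactor G (F i)) ∧
    ∀ i j, i ≠ j → Disjoint (F i) (F j)

/-- `M` is a perfect matching of `G`, viewed as a 1-regular spanning subgraph. -/
def IsPerfectMatchingGraph {V : Type*} (G M : SimpleGraph V) : Prop :=
  M ≤ G ∧ ∀ v : V, (M.neighborSet v).ncard = 1

/-- `M` is a matching of `G`: a subgraph of maximum degree at most 1. -/
def IsMatchingGraph {V : Type*} (G M : SimpleGraph V) : Prop :=
  M ≤ G ∧ ∀ v : V, (M.neighborSet v).ncard ≤ 1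

/-- `G` is a kHLPM-graph: `G` contains `k` pairwise edge-disjoint 2-factors together with
a perfect matching edge-disjoint from each of these 2-factors. -/
def IsKHLPM {V : Type*} (G : SimpleGraph V) (k : ℕ) : Prop :=
  ∃ (F : Fin k → SimpleGraph V) (M : SimpleGraph V),
    (∀ i, IsTwoFactor G (F i)) ∧ (∀ i j, i ≠ j → Disjoint (F i) (F j)) ∧
    IsPerfectMatchingGraph G M ∧ ∀ i, Disjoint M (F i)

/-- `G` is a kHLMM-graph: `G` contains `k` pairwise edge-disjoint 2-factors together with
a matching of size `⌊n/2⌋` edge-disjoint from each of these 2-factors. -/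
def IsKHLMM {V : Type*} [Fintype V] (G : SimpleGraph V) (k : ℕ) : Prop :=
  ∃ (F : Fin k → SimpleGraph V) (M : SimpleGraph V),
    (∀ i, IsTwoFactor G (F i)) ∧ (∀ i j, i ≠ j → Disjoint (F i) (F j)) ∧
    IsMatchingGraph G M ∧ M.edgeSet.ncard = Fintype.card V / 2 ∧ ∀ i, Disjoint M (F i)

/-- The graph `F` on `V ⊕ W` obtained from the disjoint union of `G` (on `V`) and `H`
(on `W`) by adding the single edge between `x : V` and `y : W`.  When `G` and `H` are
connected, this added edge is a cut-edge of `F` whose removal leaves exactly the two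
components `G` and `H`. -/
def joinByEdge {V W : Type*} (G : SimpleGraph V) (H : SimpleGraph W) (x : V) (y : W) :
    SimpleGraph (V ⊕ W) :=
  SimpleGraph.fromRel (fun a b =>
    match a, b with
    | Sum.inl u, Sum.inl v => G.Adj u v
    | Sum.inr u, Sum.inr v => H.Adj u v
    | Sum.inl u, Sum.inr v => u = x ∧ v = y
    | Sum.inr _, Sum.inl _ => False)

/-- The generalized Petersen graph `P(n,m)`: vertices `a_i` (the left copies) and `b_i`
(the right copies) for `i ∈ ZMod n`, with edges `a_i a_{i+1}`, `a_i b_i`, `b_i b_{i+m}`. -/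
def genPetersen (n m : ℕ) : SimpleGraph (ZMod n ⊕ ZMod n) :=
  SimpleGraph.fromRel (fun a b =>
    match a, b with
    | Sum.inl i, Sum.inl j => j = i + 1
    | Sum.inl i, Sum.inr j => j = i
    | Sum.inr i, Sum.inr j => j = i + (m : ZMod n)
    | Sum.inr _, Sum.inl _ => False)

/-- Cyclic distance between `i` and `j` on the cycle `ZMod n`. -/
def cycDist (n : ℕ) (i j : ZMod n) : ℕ := min (i - j).val (j - i).val

/-- The Harary graph `H_{m,n}` on `ZMod n`: each vertex is adjacent to the nearest `m/2`
vertices in each direction around the circle; if `m` is odd and `n` is even, each vertex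
is also adjacent to the diametrically opposite vertex; if `m` and `n` are both odd, the
edges `(i, i + (n-1)/2)` for `0 ≤ i ≤ (n-1)/2` are added instead. -/
def harary (m n : ℕ) : SimpleGraph (ZMod n) :=
  SimpleGraph.fromRel (fun i j =>
    (1 ≤ cycDist n i j ∧ cycDist n i j ≤ m / 2) ∨
    (m % 2 = 1 ∧ n % 2 = 0 ∧ j = i + ((n / 2 : ℕ) : ZMod n)) ∨
    (m % 2 = 1 ∧ n % 2 = 1 ∧ (∃ t : ℕ, t ≤ (n - 1) / 2 ∧ i = (t : ZMod n)) ∧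
      j = i + (((n - 1) / 2 : ℕ) : ZMod n)))

/-- The graph obtained by gluing the graphs `G i` (on vertex types `V i`) at the
distinguished vertices `x i`, which are all identified to the single vertex `none`.
The `v`-components of the resulting graph at the cut-vertex `v = none` are exactly
(canonical copies of) the graphs `G i`. -/
def wedgeAt {m : ℕ} {V : Fin m → Type*} (G : ∀ i, SimpleGraph (V i)) (x : ∀ i, V i) :
    SimpleGraph (Option (Σ i : Fin m, {u : V i // u ≠ x i})) :=
  SimpleGraph.fromRel (fun a b =>
    match a, b with
    | none, some ⟨i, u⟩ => (G i).Adj (x i) u.val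
    | some ⟨i, u⟩, some ⟨j, w⟩ => ∃ h : i = j, (G j).Adj (cast (congrArg V h) u.val) w.val
    | _, _ => False)

set_option linter.unusedSectionVars false
set_option maxHeartbeats 1000000

open Sum

section general
variable {V : Type*} [Fintype V] [DecidableEq V] {G : SimpleGraph V}

instance : Finite G.Dart := Finite.of_injective _ Dart.toProd_injective

lemma dart_symm_ne (d : G.Dart) : d.symm ≠ d := by
  intro h
  have := congrArg Dart.toProd h
  rw [Dart.symm_toProd] at this
  exact d.fst_ne_snd (congrArg Prod.fst this).symm

lemma mem_inflation_nbhd {d e : G.Dart} :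
    e ∈ (inflation G).neighborSet d ↔ e ≠ d ∧ (e.fst = d.fst ∨ e = d.symm) := by
  show (inflation G).Adj d e ↔ _
  rw [inflation, fromRel_adj]
  constructor
  · rintro ⟨hne, h⟩
    refine ⟨Ne.symm hne, ?_⟩
    rcases h with (h | h) | (h | h)
    · exact Or.inl h.symm
    · exact Or.inr (by ext : 1; rw [Dart.symm_toProd, h, Prod.swap_swap])
    · exact Or.inl h
    · exact Or.inr (by ext : 1; rw [Dart.symm_toProd, h])
  · rintro ⟨hne, h | h⟩
    · exact ⟨Ne.symm hne, Or.inr (Or.inl h)⟩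
    · exact ⟨Ne.symm hne, Or.inl (Or.inr (by rw [h, Dart.symm_toProd, Prod.swap_swap]))⟩

lemma key1 (r : V → V → Prop) (hsub : ∀ a b, r a b → G.Adj a b) (v : V) :
    {d : G.Dart | d.fst = v ∧ r d.fst d.snd}.ncard = {w | r v w}.ncard := by
  have himg : (fun d : G.Dart => d.snd) '' {d : G.Dart | d.fst = v ∧ r d.fst d.snd} = {w | r v w} := by
    ext w
    constructor
    · rintro ⟨d, ⟨h1, h2⟩, rfl⟩; rw [← h1]; exact h2
    · intro hw; exact ⟨⟨(v, w), hsub _ _ hw⟩, ⟨rfl, hw⟩, rfl⟩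
  rw [← himg, Set.ncard_image_of_injOn]
  rintro d1 ⟨h1, _⟩ d2 ⟨h2, _⟩ h
  ext : 1
  exact Prod.ext (h1.trans h2.symm) h

lemma key2 (S : Set G.Dart) : S.ncard = ∑ v, {d ∈ S | d.fst = v}.ncard := by
  classical
  letI : Fintype G.Dart := Fintype.ofFinite _
  rw [Set.ncard_eq_toFinset_card' S]
  rw [Finset.card_eq_sum_card_fiberwise (f := fun d : G.Dart => d.fst) (t := Finset.univ)
    (fun d _ => Finset.mem_univ _)]
  refine Finset.sum_congr rfl fun v _ => ?_
  rw [Set.ncard_eq_toFinset_card' {d ∈ S | d.fst = v}]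
  congr 1
  ext d
  simp [Set.mem_toFinset]

end general

section general
variable {V : Type*} [Fintype V] [DecidableEq V] {G : SimpleGraph V}

lemma keyUB (k : ℕ) (r : V → V → Prop) (hsym : ∀ a b, r a b → r b a)
    (hsub : ∀ a b, r a b → G.Adj a b) (hdeg : ∀ v, k ≤ {w | r v w}.ncard) :
    IsKTDS (inflation G) k {d : G.Dart | r d.fst d.snd} := by
  intro d
  set S : Set G.Dart := {d : G.Dart | r d.fst d.snd} with hSdef
  set A : Set G.Dart := {e : G.Dart | e.fst = d.fst ∧ r e.fst e.snd} with hAdef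
  have hAcard : k ≤ A.ncard := by rw [hAdef, key1 r hsub]; exact hdeg d.fst
  by_cases hd : d ∈ S
  · have hds : d.symm ∈ S := hsym _ _ hd
    have hsub2 : (A \ {d}) ∪ {d.symm} ⊆ S ∩ (inflation G).neighborSet d := by
      rintro e (⟨⟨h1, h2⟩, h3⟩ | h4)
      · exact ⟨h2, mem_inflation_nbhd.mpr ⟨h3, Or.inl h1⟩⟩
      · rw [Set.mem_singleton_iff] at h4; subst h4
        exact ⟨hds, mem_inflation_nbhd.mpr ⟨dart_symm_ne d, Or.inr rfl⟩⟩
    have hdisj : Disjoint (A \ {d}) {d.symm} := by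
      rw [Set.disjoint_singleton_right]
      rintro ⟨⟨h1, _⟩, _⟩
      exact d.snd_ne_fst h1
    have hdA : d ∈ A := ⟨rfl, hd⟩
    have hcard : ((A \ {d}) ∪ {d.symm}).ncard = A.ncard := by
      rw [Set.ncard_union_eq hdisj (Set.toFinite _) (Set.toFinite _),
        Set.ncard_diff_singleton_of_mem hdA, Set.ncard_singleton,
        Nat.sub_add_cancel ((Set.ncard_pos (Set.toFinite _)).mpr ⟨d, hdA⟩)]
    calc k ≤ A.ncard := hAcard
      _ = ((A \ {d}) ∪ {d.symm}).ncard := hcard.symm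
      _ ≤ _ := Set.ncard_le_ncard hsub2 (Set.toFinite _)
  · calc k ≤ A.ncard := hAcard
      _ ≤ (S ∩ (inflation G).neighborSet d).ncard := by
          refine Set.ncard_le_ncard ?_ (Set.toFinite _)
          rintro e ⟨h1, h2⟩
          refine ⟨h2, mem_inflation_nbhd.mpr ⟨?_, Or.inl h1⟩⟩
          rintro rfl; exact hd h2

lemma keyLB (k : ℕ) (hk : 2 ≤ k) (S : Set G.Dart) (hS : IsKTDS (inflation G) k S)
    (hne : ∀ v : V, ∃ w, G.Adj v w) (v : V) :
    k ≤ {d ∈ S | d.fst = v}.ncard := by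
  set A : Set G.Dart := {d ∈ S | d.fst = v} with hAdef
  by_contra hlt
  push_neg at hlt
  rcases A.eq_empty_or_nonempty with hA | ⟨d, hdA⟩
  · obtain ⟨w, hw⟩ := hne v
    set d : G.Dart := ⟨(v, w), hw⟩ with hd
    have h1 : S ∩ (inflation G).neighborSet d ⊆ {d.symm} := by
      rintro e ⟨he, hN⟩
      rcases (mem_inflation_nbhd.mp hN).2 with h | h
      · have : e ∈ A := ⟨he, h⟩
        rw [hA] at this
        exact this.elim
      · exact h
    have := (hS d).trans (Set.ncard_le_ncard h1 (Set.toFinite _))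
    rw [Set.ncard_singleton] at this
    omega
  · have h1 : S ∩ (inflation G).neighborSet d ⊆ (A \ {d}) ∪ {d.symm} := by
      rintro e ⟨he, hN⟩
      obtain ⟨hne', h⟩ := mem_inflation_nbhd.mp hN
      rcases h with h | h
      · exact Or.inl ⟨⟨he, h.trans hdA.2⟩, hne'⟩
      · exact Or.inr h
    have h2 := (hS d).trans (Set.ncard_le_ncard h1 (Set.toFinite _))
    have h3 := (Set.ncard_union_le (A \ {d}) {d.symm})
    have h4 : (A \ {d}).ncard ≤ A.ncard := Set.ncard_diff_singleton_le A d
    rw [Set.ncard_singleton] at h3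
    -- need strict: (A \ {d}).ncard = A.ncard - 1
    have h5 : (A \ {d}).ncard = A.ncard - 1 :=
      Set.ncard_diff_singleton_of_mem hdA
    have h6 : 0 < A.ncard := (Set.ncard_pos (Set.toFinite _)).mpr ⟨d, hdA⟩
    omega

lemma keySymmClosed (k : ℕ) (hk : 1 ≤ k) (S : Set G.Dart) (hS : IsKTDS (inflation G) k S)
    (h : ∀ v, {d ∈ S | d.fst = v}.ncard = k) {d : G.Dart} (hd : d ∈ S) : d.symm ∈ S := by
  by_contra hds
  set A : Set G.Dart := {e ∈ S | e.fst = d.fst} with hAdef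
  have h1 : S ∩ (inflation G).neighborSet d ⊆ A \ {d} := by
    rintro e ⟨he, hN⟩
    obtain ⟨hne', hh⟩ := mem_inflation_nbhd.mp hN
    rcases hh with hh | hh
    · exact ⟨⟨he, hh⟩, hne'⟩
    · exact absurd (hh ▸ he) hds
  have h2 := (hS d).trans (Set.ncard_le_ncard h1 (Set.toFinite _))
  have h5 : (A \ {d}).ncard = A.ncard - 1 :=
    Set.ncard_diff_singleton_of_mem (show d ∈ A from ⟨hd, rfl⟩)
  rw [h5, h d.fst] at h2
  omega

lemma keyEven (S : Set G.Dart) (h : ∀ d ∈ S, d.symm ∈ S) : Even S.ncard := by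
  classical
  letI : Fintype G.Dart := Fintype.ofFinite _
  set φ : V → ℕ := fun v => (Fintype.equivFin V v : ℕ) with hφ
  have hφinj : Function.Injective φ := fun a b hab => by
    have := Fin.val_injective hab
    exact (Fintype.equivFin V).injective this
  set p : G.Dart → Prop := fun d => φ d.fst < φ d.snd with hp
  rw [Set.ncard_eq_toFinset_card' S]
  set F := S.toFinset with hF
  have hcl : ∀ d ∈ F, d.symm ∈ F := by
    intro d hdF; rw [Set.mem_toFinset] at hdF ⊢; exact h d hdF
  have hbij : (F.filter (fun d => p d)).card = (F.filter (fun d => ¬ p d)).card := by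
    refine Finset.card_bij' (fun d _ => d.symm) (fun d _ => d.symm) ?_ ?_ ?_ ?_
    · intro d hd
      rw [Finset.mem_filter] at hd ⊢
      refine ⟨hcl d hd.1, ?_⟩
      simp only [hp, Dart.symm_toProd] at hd ⊢
      exact not_lt_of_gt hd.2
    · intro d hd
      rw [Finset.mem_filter] at hd ⊢
      refine ⟨hcl d hd.1, ?_⟩
      simp only [hp, Dart.symm_toProd] at hd ⊢
      rcases lt_or_ge (φ d.snd) (φ d.fst) with h' | h'
      · exact h'
      · exact absurd (lt_of_le_of_ne h' (fun hc => d.fst_ne_snd (hφinj hc))) hd.2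
    · intro d _; exact Dart.symm_symm d
    · intro d _; exact Dart.symm_symm d
  have := Finset.card_filter_add_card_filter_not (s := F) (p := fun d => p d)
  exact ⟨(F.filter (fun d => p d)).card, by omega⟩
end general


section zmod

/-- circulant relation: b = a ± s for 1 ≤ s ≤ t -/
def circ (N t : ℕ) (a b : ZMod N) : Prop :=
  ∃ s : ℕ, 1 ≤ s ∧ s ≤ t ∧ (b = a + (s : ZMod N) ∨ a = b + (s : ZMod N))


variable {N t : ℕ}

lemma natCast_zmod_ne_zero {s : ℕ} (h1 : 0 < s) (h2 : s < N) : (s : ZMod N) ≠ 0 := by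
  intro h
  rcases (ZMod.natCast_eq_zero_iff s N).mp h with ⟨c, hc⟩
  rcases c with _ | c
  · omega
  · have : N ≤ s := by
      calc N = N * 1 := (mul_one N).symm
        _ ≤ N * (c+1) := Nat.mul_le_mul_left N (by omega)
        _ = s := hc.symm
    omega

lemma circ_symm (a b : ZMod N) (h : circ N t a b) : circ N t b a := by
  obtain ⟨s, h1, h2, h3⟩ := h
  exact ⟨s, h1, h2, h3.symm⟩

lemma circ_ne (hN : 2 * t < N) (a b : ZMod N) (h : circ N t a b) : a ≠ b := by
  obtain ⟨s, h1, h2, h3⟩ := h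
  rintro rfl
  have hs : (s : ZMod N) ≠ 0 := natCast_zmod_ne_zero (by omega) (by omega)
  rcases h3 with h3 | h3 <;>
  · apply hs
    have := congrArg (fun z => z - a) h3
    simpa using this.symm

lemma circ_set_eq (hN : 2 * t < N) (a : ZMod N) :
    {b | circ N t a b} =
      ↑((((Finset.Icc 1 t).image fun s : ℕ => a + (s : ZMod N)) ∪
        ((Finset.Icc 1 t).image fun s : ℕ => a - (s : ZMod N)))) := by
  ext b
  simp only [Finset.coe_union, Set.mem_union, Finset.coe_image, Set.mem_image,
    Finset.mem_coe, Finset.mem_Icc, Set.mem_setOf_eq]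
  constructor
  · rintro ⟨s, h1, h2, h3 | h3⟩
    · exact Or.inl ⟨s, ⟨h1, h2⟩, h3.symm⟩
    · refine Or.inr ⟨s, ⟨h1, h2⟩, ?_⟩
      rw [h3]; ring
  · rintro (⟨s, ⟨h1, h2⟩, h3⟩ | ⟨s, ⟨h1, h2⟩, h3⟩)
    · exact ⟨s, h1, h2, Or.inl h3.symm⟩
    · exact ⟨s, h1, h2, Or.inr (by rw [← h3]; ring)⟩

lemma cast_injOn_Icc (hN : 2 * t < N) :
    ∀ s1 ∈ Finset.Icc 1 t, ∀ s2 ∈ Finset.Icc 1 t, (s1 : ZMod N) = (s2 : ZMod N) → s1 = s2 := by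
  intro s1 hs1 s2 hs2 h
  rw [Finset.mem_Icc] at hs1 hs2
  have e1 := ZMod.val_cast_of_lt (show s1 < N by omega)
  have e2 := ZMod.val_cast_of_lt (show s2 < N by omega)
  rw [← e1, ← e2, h]

lemma circ_card (hN : 2 * t < N) (a : ZMod N) :
    {b | circ N t a b}.ncard = 2 * t := by
  haveI : NeZero N := ⟨by omega⟩
  rw [circ_set_eq hN a, Set.ncard_coe_finset]
  have hinj := cast_injOn_Icc (N := N) hN
  rw [Finset.card_union_of_disjoint, Finset.card_image_of_injOn, Finset.card_image_of_injOn]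
  · rw [Nat.card_Icc]; omega
  · intro s1 hs1 s2 hs2 h
    exact hinj s1 hs1 s2 hs2 (by
      have := congrArg (fun z => z - a) h; simpa [sub_sub] using this)
  · intro s1 hs1 s2 hs2 h
    refine hinj s1 hs1 s2 hs2 ?_
    have := congrArg (fun z => a - z) h
    simpa using this
  · rw [Finset.disjoint_left]
    rintro b hb1 hb2
    simp only [Finset.mem_image, Finset.mem_Icc] at hb1 hb2
    obtain ⟨s1, ⟨hs11, hs12⟩, h1⟩ := hb1
    obtain ⟨s2, ⟨hs21, hs22⟩, h2⟩ := hb2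
    have : ((s1 + s2 : ℕ) : ZMod N) = 0 := by
      push_cast
      have := h1.trans h2.symm
      have h3 := congrArg (fun z => z - a + (s2 : ZMod N)) this
      calc (s1 : ZMod N) + s2 = (a + s1 - a) + s2 := by ring
        _ = (a - s2 - a) + s2 := by rw [this]
        _ = 0 := by ring
    exact natCast_zmod_ne_zero (by omega) (by omega) this

end zmod

def diamRel (N : ℕ) (a b : ZMod N) : Prop := b = a + ((N / 2 : ℕ) : ZMod N)
def chords (N lo : ℕ) (a b : ZMod N) : Prop :=
  ∃ s : ℕ, lo ≤ s ∧ s ≤ (N - 1) / 2 ∧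
    ((a = (s : ZMod N) ∧ b = a + (((N - 1) / 2 : ℕ) : ZMod N)) ∨
     (b = (s : ZMod N) ∧ a = b + (((N - 1) / 2 : ℕ) : ZMod N)))

section zmod2
variable {N t : ℕ}

lemma diamRel_symm (hNe : N % 2 = 0) (a b : ZMod N) (h : diamRel N a b) : diamRel N b a := by
  rw [diamRel] at h ⊢
  rw [h]
  have : ((N / 2 : ℕ) : ZMod N) + ((N / 2 : ℕ) : ZMod N) = ((N : ℕ) : ZMod N) := by
    rw [← Nat.cast_add]; congr 1; omega
  rw [add_assoc, this, ZMod.natCast_self, add_zero]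

lemma diamRel_ne (hNe : N % 2 = 0) (hN : 2 ≤ N) (a b : ZMod N) (h : diamRel N a b) : a ≠ b := by
  rintro rfl
  have : ((N / 2 : ℕ) : ZMod N) = 0 := by
    have := congrArg (fun z => z - a) h; simpa using this.symm
  exact natCast_zmod_ne_zero (by omega) (by omega) this

lemma diamRel_card (a : ZMod N) : {b | diamRel N a b}.ncard = 1 := by
  have : {b | diamRel N a b} = {a + ((N / 2 : ℕ) : ZMod N)} := by
    ext b; simp [diamRel]
  rw [this, Set.ncard_singleton]

lemma circ_diamRel_disj (hNe : N % 2 = 0) (hN : 2 ≤ N) (ht : 2 * t < N) (a b : ZMod N) :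
    ¬ (circ N t a b ∧ diamRel N a b) := by
  rintro ⟨⟨s, hs1, hs2, hc⟩, hd⟩
  rw [diamRel] at hd
  rcases hc with hc | hc
  · rw [hd] at hc
    have : ((N / 2 : ℕ) : ZMod N) = ((s : ℕ) : ZMod N) := by
      have := congrArg (fun z => z - a) hc; simpa using this
    have h6 : N / 2 = s := by
      rw [← ZMod.val_cast_of_lt (show N / 2 < N by omega),
        ← ZMod.val_cast_of_lt (show s < N by omega), this]
    omega
  · have : ((N / 2 + s : ℕ) : ZMod N) = 0 := by
      push_cast
      calc ((N / 2 : ℕ) : ZMod N) + (s : ZMod N)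
          = (a + ((N/2:ℕ) : ZMod N) + s - a) := by ring
        _ = (b + s - a) := by rw [← hd]
        _ = 0 := by rw [← hc]; ring
    exact natCast_zmod_ne_zero (by omega) (by omega) this

lemma chords_symm {lo : ℕ} (a b : ZMod N) (h : chords N lo a b) : chords N lo b a := by
  obtain ⟨s, h1, h2, h3⟩ := h
  exact ⟨s, h1, h2, h3.symm⟩

lemma chords_cases {lo : ℕ} {a b : ZMod N} (h : chords N lo a b) :
    b = a + (((N - 1) / 2 : ℕ) : ZMod N) ∨ b = a - (((N - 1) / 2 : ℕ) : ZMod N) := by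
  obtain ⟨s, _, _, (⟨_, h3⟩ | ⟨_, h3⟩)⟩ := h
  · exact Or.inl h3
  · exact Or.inr (by rw [h3]; ring)

lemma chords_ne {lo : ℕ} (hNo : N % 2 = 1) (hN : 3 ≤ N) (a b : ZMod N)
    (h : chords N lo a b) : a ≠ b := by
  have hh : (((N - 1) / 2 : ℕ) : ZMod N) ≠ 0 :=
    natCast_zmod_ne_zero (by omega) (by omega)
  rintro rfl
  rcases chords_cases h with h3 | h3
  · exact hh (by have := congrArg (fun z => z - a) h3; simpa using this.symm)
  · apply hh
    have := congrArg (fun z => a - z) h3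
    simpa using this.symm

lemma chords_nbhd {lo : ℕ} (hNo : N % 2 = 1) (hN : 3 ≤ N) (a : ZMod N) :
    {b | chords N lo a b} =
      (if lo ≤ a.val ∧ a.val ≤ (N - 1) / 2 then {a + (((N - 1) / 2 : ℕ) : ZMod N)} else ∅) ∪
      (if (N - 1) / 2 + lo ≤ a.val then {a - (((N - 1) / 2 : ℕ) : ZMod N)} else ∅) := by
  haveI : NeZero N := ⟨by omega⟩
  set h2 : ℕ := (N - 1) / 2 with hh2
  have hval : a.val < N := ZMod.val_lt a
  ext b
  simp only [Set.mem_union, Set.mem_setOf_eq]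
  constructor
  · rintro ⟨s, hs1, hs2, (⟨ha, hb⟩ | ⟨hb, ha⟩)⟩
    · left
      have : a.val = s := by rw [ha, ZMod.val_cast_of_lt (by omega)]
      rw [if_pos (by omega)]
      exact hb
    · right
      have hav : a.val = s + h2 := by
        rw [ha, hb, ← Nat.cast_add, ZMod.val_cast_of_lt (by omega)]
      rw [if_pos (by omega)]
      rw [Set.mem_singleton_iff, ha, hb]
      ring
  · rintro (hb | hb)
    · by_cases hc : lo ≤ a.val ∧ a.val ≤ h2
      · rw [if_pos hc, Set.mem_singleton_iff] at hb
        exact ⟨a.val, hc.1, hc.2, Or.inl ⟨(ZMod.natCast_rightInverse a).symm, hb⟩⟩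
      · rw [if_neg hc] at hb; exact hb.elim
    · by_cases hc : h2 + lo ≤ a.val
      · rw [if_pos hc, Set.mem_singleton_iff] at hb
        refine ⟨a.val - h2, by omega, by omega, Or.inr ⟨?_, ?_⟩⟩
        · rw [hb]
          have : ((a.val - h2 : ℕ) : ZMod N) = ((a.val : ℕ) : ZMod N) - (h2 : ZMod N) := by
            rw [Nat.cast_sub (by omega)]
          rw [this, ZMod.natCast_rightInverse a]
        · rw [hb]; ring
      · rw [if_neg hc] at hb; exact hb.elim

lemma chords_card_one (hNo : N % 2 = 1) (hN : 3 ≤ N) (a : ZMod N) :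
    {b | chords N 1 a b}.ncard = if a = 0 then 0 else 1 := by
  haveI : NeZero N := ⟨by omega⟩
  rw [chords_nbhd hNo hN a]
  set h2 : ℕ := (N - 1) / 2 with hh2
  have hval : a.val < N := ZMod.val_lt a
  have hz : a = 0 ↔ a.val = 0 := by
    constructor
    · rintro rfl; exact ZMod.val_zero
    · intro h; rw [← ZMod.natCast_rightInverse a, h, Nat.cast_zero]
  have hN2 : N - 1 = 2 * h2 := by omega
  rcases Nat.lt_or_ge a.val 1 with h1 | h1
  · rw [if_neg (by omega), if_neg (by omega), if_pos (hz.mpr (by omega))]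
    simp
  · rw [if_neg (fun hc => absurd (hz.mp hc) (by omega))]
    rcases le_or_gt a.val h2 with h3 | h3
    · rw [if_pos ⟨h1, h3⟩, if_neg (by omega)]
      simp
    · rw [if_neg (by omega), if_pos (by omega)]
      simp

lemma chords_card_zero (hNo : N % 2 = 1) (hN : 3 ≤ N) (a : ZMod N) :
    {b | chords N 0 a b}.ncard = if a.val = (N - 1) / 2 then 2 else 1 := by
  haveI : NeZero N := ⟨by omega⟩
  rw [chords_nbhd hNo hN a]
  set h2 : ℕ := (N - 1) / 2 with hh2
  have hval : a.val < N := ZMod.val_lt a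
  have hN2 : N - 1 = 2 * h2 := by omega
  have hne : a + ((h2 : ℕ) : ZMod N) ≠ a - ((h2 : ℕ) : ZMod N) := by
    intro hc
    have : ((h2 + h2 : ℕ) : ZMod N) = 0 := by
      push_cast
      calc (h2 : ZMod N) + (h2 : ZMod N) = (a + h2) - (a - h2) := by ring
        _ = 0 := by rw [hc]; ring
    exact natCast_zmod_ne_zero (by omega) (by omega) this
  rcases Nat.lt_or_ge a.val h2 with h3 | h3
  · rw [if_pos (by omega), if_neg (by omega), if_neg (by omega)]
    simp
  · rcases Nat.eq_or_lt_of_le h3 with h4 | h4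
    · rw [if_pos (by omega), if_pos (by omega), if_pos h4.symm]
      rw [Set.union_singleton, Set.ncard_pair (Ne.symm hne)]
    · rw [if_neg (by omega), if_pos (by omega), if_neg (by omega)]
      simp

lemma circ_chords_disj {lo : ℕ} (hNo : N % 2 = 1) (hN : 3 ≤ N) (ht : t < (N - 1) / 2)
    (a b : ZMod N) : ¬ (circ N t a b ∧ chords N lo a b) := by
  rintro ⟨⟨s, hs1, hs2, hc⟩, hch⟩
  set h2 : ℕ := (N - 1) / 2 with hh2
  have hN2 : N - 1 = 2 * h2 := by omega
  have hcb : b = a + (s : ZMod N) ∨ b = a - (s : ZMod N) := by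
    rcases hc with hc | hc
    · exact Or.inl hc
    · exact Or.inr (by rw [hc]; ring)
  have key : ∀ u v : ℕ, 0 < u + v → u + v < N →
      a + (u : ZMod N) = a - (v : ZMod N) → False := by
    intro u v h1 h2' hcc
    have : ((u + v : ℕ) : ZMod N) = 0 := by
      push_cast
      calc (u : ZMod N) + v = (a + u) - (a - v) := by ring
        _ = 0 := by rw [hcc]; ring
    exact natCast_zmod_ne_zero h1 h2' this
  have keq : ∀ u v : ℕ, u < N → v < N → a + (u : ZMod N) = a + (v : ZMod N) → u = v := by
    intro u v h1 h2' hcc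
    have : ((u : ℕ) : ZMod N) = ((v : ℕ) : ZMod N) := by
      have := congrArg (fun z => z - a) hcc; simpa using this
    rw [← ZMod.val_cast_of_lt h1, ← ZMod.val_cast_of_lt h2', this]
  rcases chords_cases hch with hd | hd <;> rcases hcb with hcb | hcb
  · exact absurd (keq s h2 (by omega) (by omega) (hcb.symm.trans hd)) (by omega)
  · exact key h2 s (by omega) (by omega) (hd.symm.trans hcb)
  · exact key s h2 (by omega) (by omega) (hcb.symm.trans hd)
  · have : a - (s : ZMod N) = a - (h2 : ZMod N) := hcb.symm.trans hd
    have : a + (s : ZMod N) = a + (h2 : ZMod N) := by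
      have h5 := congrArg (fun z => a + a - z) this
      simpa [sub_sub, add_sub_assoc] using h5
    exact absurd (keq s h2 (by omega) (by omega) this) (by omega)

end zmod2


section build
variable {n m : ℕ} (x : Fin n) (y : Fin m)

def mixRel (rL : Fin n → Fin n → Prop) (rR : Fin m → Fin m → Prop) (br : Bool) :
    (Fin n ⊕ Fin m) → (Fin n ⊕ Fin m) → Prop
  | inl i, inl j => rL i j
  | inr i, inr j => rR i j
  | inl i, inr j => br ∧ i = x ∧ j = y
  | inr j, inl i => br ∧ i = x ∧ j = y

variable {rL : Fin n → Fin n → Prop} {rR : Fin m → Fin m → Prop} {br : Bool}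

lemma mixRel_symm (hL : ∀ a b, rL a b → rL b a) (hR : ∀ a b, rR a b → rR b a) :
    ∀ a b, mixRel x y rL rR br a b → mixRel x y rL rR br b a := by
  rintro (i | i) (j | j) h
  · exact hL i j h
  · exact h
  · exact h
  · exact hR i j h

lemma jbe_adj_ll (u v : Fin n) :
    (joinByEdge (⊤ : SimpleGraph (Fin n)) (⊤ : SimpleGraph (Fin m)) x y).Adj (inl u) (inl v)
      ↔ u ≠ v := by
  rw [joinByEdge, fromRel_adj]
  constructor
  · rintro ⟨h, _⟩ rfl; exact h rfl
  · intro h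
    exact ⟨fun hc => h (by injection hc), Or.inl h⟩

lemma jbe_adj_rr (u v : Fin m) :
    (joinByEdge (⊤ : SimpleGraph (Fin n)) (⊤ : SimpleGraph (Fin m)) x y).Adj (inr u) (inr v)
      ↔ u ≠ v := by
  rw [joinByEdge, fromRel_adj]
  constructor
  · rintro ⟨h, _⟩ rfl; exact h rfl
  · intro h
    exact ⟨fun hc => h (by injection hc), Or.inl h⟩

lemma jbe_adj_bridge :
    (joinByEdge (⊤ : SimpleGraph (Fin n)) (⊤ : SimpleGraph (Fin m)) x y).Adj (inl x) (inr y) := by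
  rw [joinByEdge, fromRel_adj]
  exact ⟨fun hc => by injection hc, Or.inl ⟨rfl, rfl⟩⟩

lemma mixRel_sub (hL : ∀ a b, rL a b → a ≠ b) (hR : ∀ a b, rR a b → a ≠ b) :
    ∀ a b, mixRel x y rL rR br a b →
      (joinByEdge (⊤ : SimpleGraph (Fin n)) (⊤ : SimpleGraph (Fin m)) x y).Adj a b := by
  rintro (i | i) (j | j) h
  · exact (jbe_adj_ll x y i j).mpr (hL i j h)
  · obtain ⟨_, rfl, rfl⟩ := h
    exact jbe_adj_bridge _ _
  · obtain ⟨_, rfl, rfl⟩ := h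
    exact (jbe_adj_bridge _ _).symm
  · exact (jbe_adj_rr x y i j).mpr (hR i j h)

lemma mixRel_deg_left (i : Fin n) :
    {w | mixRel x y rL rR br (inl i) w}.ncard
      = {j | rL i j}.ncard + (if br ∧ i = x then 1 else 0) := by
  have hset : {w | mixRel x y rL rR br (inl i) w}
      = inl '' {j | rL i j} ∪ (if br ∧ i = x then {inr y} else ∅) := by
    ext (j | j)
    · simp only [Set.mem_union, Set.mem_image, Set.mem_setOf_eq]
      constructor
      · intro h; exact Or.inl ⟨j, h, rfl⟩
      · rintro (⟨j', hj', hje⟩ | h)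
        · cases hje; exact hj'
        · rcases Classical.em (br ∧ i = x) with hc | hc
          · rw [if_pos hc] at h; exact absurd h (by simp)
          · rw [if_neg hc] at h; exact h.elim
    · simp only [Set.mem_union, Set.mem_image, Set.mem_setOf_eq]
      constructor
      · rintro ⟨hbr, rfl, rfl⟩
        rw [if_pos ⟨hbr, rfl⟩]
        exact Or.inr rfl
      · rintro (⟨j', _, hje⟩ | h)
        · exact absurd hje (by simp)
        · rcases Classical.em (br ∧ i = x) with hc | hc
          · rw [if_pos hc, Set.mem_singleton_iff] at h
            injection h with h2
            subst h2
            exact ⟨hc.1, hc.2, rfl⟩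
          · rw [if_neg hc] at h; exact h.elim
  rw [hset]
  rw [Set.ncard_union_eq ?disj (Set.toFinite _) (Set.toFinite _),
    Set.ncard_image_of_injective _ inl_injective]
  · congr 1
    rcases Classical.em (br ∧ i = x) with hc | hc
    · rw [if_pos hc, if_pos hc, Set.ncard_singleton]
    · rw [if_neg hc, if_neg hc, Set.ncard_empty]
  case disj =>
    rcases Classical.em (br ∧ i = x) with hc | hc
    · rw [if_pos hc, Set.disjoint_singleton_right]
      rintro ⟨j', _, hje⟩
      exact absurd hje (by simp)
    · rw [if_neg hc]; exact Set.disjoint_empty _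

lemma mixRel_deg_right (j : Fin m) :
    {w | mixRel x y rL rR br (inr j) w}.ncard
      = {i | rR j i}.ncard + (if br ∧ j = y then 1 else 0) := by
  have hset : {w | mixRel x y rL rR br (inr j) w}
      = inr '' {i | rR j i} ∪ (if br ∧ j = y then {inl x} else ∅) := by
    ext (i | i)
    · simp only [Set.mem_union, Set.mem_image, Set.mem_setOf_eq]
      constructor
      · rintro ⟨hbr, rfl, rfl⟩
        rw [if_pos ⟨hbr, rfl⟩]
        exact Or.inr rfl
      · rintro (⟨j', _, hje⟩ | h)
        · exact absurd hje (by simp)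
        · rcases Classical.em (br ∧ j = y) with hc | hc
          · rw [if_pos hc, Set.mem_singleton_iff] at h
            injection h with h2
            subst h2
            exact ⟨hc.1, rfl, hc.2⟩
          · rw [if_neg hc] at h; exact h.elim
    · simp only [Set.mem_union, Set.mem_image, Set.mem_setOf_eq]
      constructor
      · intro h; exact Or.inl ⟨i, h, rfl⟩
      · rintro (⟨j', hj', hje⟩ | h)
        · cases hje; exact hj'
        · rcases Classical.em (br ∧ j = y) with hc | hc
          · rw [if_pos hc] at h; exact absurd h (by simp)
          · rw [if_neg hc] at h; exact h.elim
  rw [hset]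
  rw [Set.ncard_union_eq ?disj (Set.toFinite _) (Set.toFinite _),
    Set.ncard_image_of_injective _ inr_injective]
  · congr 1
    rcases Classical.em (br ∧ j = y) with hc | hc
    · rw [if_pos hc, if_pos hc, Set.ncard_singleton]
    · rw [if_neg hc, if_neg hc, Set.ncard_empty]
  case disj =>
    rcases Classical.em (br ∧ j = y) with hc | hc
    · rw [if_pos hc, Set.disjoint_singleton_right]
      rintro ⟨j', _, hje⟩
      exact absurd hje (by simp)
    · rw [if_neg hc]; exact Set.disjoint_empty _

end build

section transport

def finZEquiv (N : ℕ) [NeZero N] : Fin N ≃ ZMod N where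
  toFun i := (i.val : ZMod N)
  invFun b := ⟨b.val, b.val_lt⟩
  left_inv i := by
    ext
    simp [ZMod.val_cast_of_lt i.isLt]
  right_inv b := by
    simp only
    exact ZMod.natCast_rightInverse b

lemma transport_ncard {N : ℕ} (e : Fin N ≃ ZMod N) (B : Set (ZMod N)) :
    {j : Fin N | B (e j)}.ncard = B.ncard := by
  have h1 : {j : Fin N | B (e j)} = e ⁻¹' B := rfl
  have h2 := Set.ncard_image_of_injective (e ⁻¹' B) e.injective
  rw [Set.image_preimage_eq B e.surjective] at h2
  rw [h1]
  exact h2.symm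

end transport


section assembly
open Sum SimpleGraph
variable {n m k : ℕ} (x : Fin n) (y : Fin m)

local notation "FF" => joinByEdge (⊤ : SimpleGraph (Fin n)) (⊤ : SimpleGraph (Fin m)) x y

lemma hne_FF (hn : 2 ≤ n) (hm : 2 ≤ m) :
    ∀ v : Fin n ⊕ Fin m, ∃ w, (FF).Adj v w := by
  haveI : Nontrivial (Fin n) := Fin.nontrivial_iff_two_le.mpr hn
  haveI : Nontrivial (Fin m) := Fin.nontrivial_iff_two_le.mpr hm
  rintro (u | u)
  · obtain ⟨u', hu'⟩ := exists_ne u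
    exact ⟨inl u', (jbe_adj_ll x y u u').mpr (Ne.symm hu')⟩
  · obtain ⟨u', hu'⟩ := exists_ne u
    exact ⟨inr u', (jbe_adj_rr x y u u').mpr (Ne.symm hu')⟩

lemma keyCard (r : (Fin n ⊕ Fin m) → (Fin n ⊕ Fin m) → Prop)
    (hsub : ∀ a b, r a b → (FF).Adj a b) :
    {d : (FF).Dart | r d.fst d.snd}.ncard = ∑ v, {w | r v w}.ncard := by
  rw [key2 {d : (FF).Dart | r d.fst d.snd}]
  refine Finset.sum_congr rfl fun v _ => ?_
  rw [← key1 r hsub v]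
  congr 1
  ext d
  exact ⟨fun ⟨h1, h2⟩ => ⟨h2, h1⟩, fun ⟨h1, h2⟩ => ⟨h2, h1⟩⟩

lemma lower_generic (hk : 2 ≤ k) (hn : 2 ≤ n) (hm : 2 ≤ m) (b : ℕ)
    (hb : ∃ S, IsKTDS (inflation (FF)) k S ∧ S.ncard = b) : k * (n + m) ≤ b := by
  obtain ⟨S, hS, rfl⟩ := hb
  rw [key2 S]
  calc k * (n + m) = ∑ _v : Fin n ⊕ Fin m, k := by
        rw [Finset.sum_const, Finset.card_univ, Fintype.card_sum, Fintype.card_fin,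
          Fintype.card_fin, smul_eq_mul, mul_comm]
    _ ≤ _ := Finset.sum_le_sum fun v _ => keyLB k hk S hS (hne_FF x y hn hm) v

lemma lower_plus (hk : 2 ≤ k) (hko : k % 2 = 1) (hn : 2 ≤ n) (hm : 2 ≤ m)
    (hnm : (n + m) % 2 = 1) (b : ℕ)
    (hb : ∃ S, IsKTDS (inflation (FF)) k S ∧ S.ncard = b) : k * (n + m) + 1 ≤ b := by
  have h1 := lower_generic x y hk hn hm b hb
  rcases Nat.lt_or_ge (k * (n + m)) b with h | h
  · omega
  · exfalso
    have hbe : b = k * (n + m) := by omega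
    obtain ⟨S, hS, hcard⟩ := hb
    have hfib : ∀ v, {d ∈ S | d.fst = v}.ncard = k := by
      by_contra hcon
      push_neg at hcon
      obtain ⟨v0, hv0⟩ := hcon
      have hlt : ∑ _v : Fin n ⊕ Fin m, k < ∑ v, {d ∈ S | d.fst = v}.ncard := by
        refine Finset.sum_lt_sum (fun v _ => keyLB k hk S hS (hne_FF x y hn hm) v)
          ⟨v0, Finset.mem_univ v0, ?_⟩
        exact lt_of_le_of_ne (keyLB k hk S hS (hne_FF x y hn hm) v0) (Ne.symm hv0)
      rw [← key2 S, hcard, hbe] at hlt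
      rw [Finset.sum_const, Finset.card_univ, Fintype.card_sum, Fintype.card_fin,
        Fintype.card_fin, smul_eq_mul, Nat.mul_comm] at hlt
      omega
    have hclosed : ∀ d ∈ S, d.symm ∈ S :=
      fun d hd => keySymmClosed k (by omega) S hS hfib hd
    have heven := keyEven S hclosed
    rw [hcard, hbe] at heven
    rcases heven with ⟨c, hc⟩
    have : k * (n + m) % 2 = 1 := Nat.odd_mul.mpr ⟨Nat.odd_iff.mpr hko, Nat.odd_iff.mpr hnm⟩
      |> Nat.odd_iff.mp
    omega

lemma ktdn_eq_of (c : ℕ) (r : (Fin n ⊕ Fin m) → (Fin n ⊕ Fin m) → Prop)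
    (hsym : ∀ a b, r a b → r b a) (hsub : ∀ a b, r a b → (FF).Adj a b)
    (hdeg : ∀ v, k ≤ {w | r v w}.ncard)
    (hsum : ∑ v, {w | r v w}.ncard = c)
    (hlow : ∀ b, (∃ S, IsKTDS (inflation (FF)) k S ∧ S.ncard = b) → c ≤ b) :
    ktdn (inflation (FF)) k = c := by
  have hmem : c ∈ {b | ∃ S : Set (FF).Dart, IsKTDS (inflation (FF)) k S ∧ S.ncard = b} :=
    ⟨{d : (FF).Dart | r d.fst d.snd}, keyUB k r hsym hsub hdeg,
      (keyCard x y r hsub).trans hsum⟩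
  refine le_antisymm (Nat.sInf_le hmem) (le_csInf ⟨c, hmem⟩ hlow)

end assembly


section cases
open Sum SimpleGraph
variable {n m k : ℕ} (x : Fin n) (y : Fin m)

local notation "FF" => joinByEdge (⊤ : SimpleGraph (Fin n)) (⊤ : SimpleGraph (Fin m)) x y

lemma ncard_or {α : Type*} [Finite α] (p q : α → Prop) (h : ∀ b, ¬(p b ∧ q b)) :
    {b | p b ∨ q b}.ncard = {b | p b}.ncard + {b | q b}.ncard := by
  rw [Set.setOf_or, Set.ncard_union_eq ?_ (Set.toFinite _) (Set.toFinite _)]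
  rw [Set.disjoint_left]
  intro b hb1 hb2
  exact h b ⟨hb1, hb2⟩

lemma sum_deg {f : (Fin n ⊕ Fin m) → ℕ} {cL cR : ℕ}
    (hL : ∀ i : Fin n, f (inl i) = cL) (hR : ∀ j : Fin m, f (inr j) = cR) :
    ∑ v, f v = n * cL + m * cR := by
  rw [Fintype.sum_sum_type]
  rw [Finset.sum_congr rfl (fun i _ => hL i), Finset.sum_congr rfl (fun j _ => hR j)]
  simp [Finset.sum_const, mul_comm]

lemma caseA (hk : 2 ≤ k) (hkn : k < n) (hnm : n ≤ m) (hke : k % 2 = 0) :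
    ktdn (inflation (FF)) k = k * (n + m) := by
  haveI : NeZero n := ⟨by omega⟩
  haveI : NeZero m := ⟨by omega⟩
  set t : ℕ := k / 2 with ht
  set eL : Fin n ≃ ZMod n := finZEquiv n with heL
  set eR : Fin m ≃ ZMod m := finZEquiv m with heR
  set rL : Fin n → Fin n → Prop := fun i j => circ n t (eL i) (eL j) with hrL
  set rR : Fin m → Fin m → Prop := fun i j => circ m t (eR i) (eR j) with hrR
  have htn : 2 * t < n := by omega
  have htm : 2 * t < m := by omega
  have hdL : ∀ i : Fin n, {w | mixRel x y rL rR false (inl i) w}.ncard = k := by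
    intro i
    rw [mixRel_deg_left, if_neg (by simp)]
    have h1 : {j | rL i j}.ncard = {b | circ n t (eL i) b}.ncard :=
      transport_ncard eL {b | circ n t (eL i) b}
    rw [h1, circ_card htn]
    omega
  have hdR : ∀ j : Fin m, {w | mixRel x y rL rR false (inr j) w}.ncard = k := by
    intro j
    rw [mixRel_deg_right, if_neg (by simp)]
    have h1 : {i | rR j i}.ncard = {b | circ m t (eR j) b}.ncard :=
      transport_ncard eR {b | circ m t (eR j) b}
    rw [h1, circ_card htm]
    omega
  refine ktdn_eq_of x y (k * (n + m)) (mixRel x y rL rR false)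
    (mixRel_symm x y (fun a b => circ_symm _ _) (fun a b => circ_symm _ _))
    (mixRel_sub x y (fun a b h => fun hc => circ_ne htn _ _ h (by rw [hc]))
      (fun a b h => fun hc => circ_ne htm _ _ h (by rw [hc])))
    (fun v => ?_) ?_ (lower_generic x y hk (by omega) (by omega))
  · rcases v with i | j
    · rw [hdL i]
    · rw [hdR j]
  · rw [sum_deg hdL hdR]
    ring

lemma caseB (hk : 2 ≤ k) (hkn : k < n) (hnm : n ≤ m) (hko : k % 2 = 1)
    (hne : n % 2 = 0) (hme : m % 2 = 0) :
    ktdn (inflation (FF)) k = k * (n + m) := by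
  haveI : NeZero n := ⟨by omega⟩
  haveI : NeZero m := ⟨by omega⟩
  set t : ℕ := (k - 1) / 2 with ht
  set eL : Fin n ≃ ZMod n := finZEquiv n with heL
  set eR : Fin m ≃ ZMod m := finZEquiv m with heR
  set rL : Fin n → Fin n → Prop :=
    fun i j => circ n t (eL i) (eL j) ∨ diamRel n (eL i) (eL j) with hrL
  set rR : Fin m → Fin m → Prop :=
    fun i j => circ m t (eR i) (eR j) ∨ diamRel m (eR i) (eR j) with hrR
  have htn : 2 * t < n := by omega
  have htm : 2 * t < m := by omega
  have hdL : ∀ i : Fin n, {w | mixRel x y rL rR false (inl i) w}.ncard = k := by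
    intro i
    rw [mixRel_deg_left, if_neg (by simp)]
    have h1 : {j | rL i j}.ncard
        = {b | circ n t (eL i) b ∨ diamRel n (eL i) b}.ncard :=
      transport_ncard eL {b | circ n t (eL i) b ∨ diamRel n (eL i) b}
    rw [h1, ncard_or _ _ (circ_diamRel_disj hne (by omega) htn (eL i)),
      circ_card htn, diamRel_card]
    omega
  have hdR : ∀ j : Fin m, {w | mixRel x y rL rR false (inr j) w}.ncard = k := by
    intro j
    rw [mixRel_deg_right, if_neg (by simp)]
    have h1 : {i | rR j i}.ncard
        = {b | circ m t (eR j) b ∨ diamRel m (eR j) b}.ncard :=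
      transport_ncard eR {b | circ m t (eR j) b ∨ diamRel m (eR j) b}
    rw [h1, ncard_or _ _ (circ_diamRel_disj hme (by omega) htm (eR j)),
      circ_card htm, diamRel_card]
    omega
  refine ktdn_eq_of x y (k * (n + m)) (mixRel x y rL rR false)
    (mixRel_symm x y
      (fun a b h => h.elim (fun h' => Or.inl (circ_symm _ _ h'))
        (fun h' => Or.inr (diamRel_symm hne _ _ h')))
      (fun a b h => h.elim (fun h' => Or.inl (circ_symm _ _ h'))
        (fun h' => Or.inr (diamRel_symm hme _ _ h'))))
    (mixRel_sub x y
      (fun a b h hc => h.elim (fun h' => circ_ne htn _ _ h' (by rw [hc]))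
        (fun h' => diamRel_ne hne (by omega) _ _ h' (by rw [hc])))
      (fun a b h hc => h.elim (fun h' => circ_ne htm _ _ h' (by rw [hc]))
        (fun h' => diamRel_ne hme (by omega) _ _ h' (by rw [hc]))))
    (fun v => ?_) ?_ (lower_generic x y hk (by omega) (by omega))
  · rcases v with i | j
    · rw [hdL i]
    · rw [hdR j]
  · rw [sum_deg hdL hdR]
    ring

lemma caseC (hk : 2 ≤ k) (hkn : k < n) (hnm : n ≤ m) (hko : k % 2 = 1)
    (hno : n % 2 = 1) (hmo : m % 2 = 1) :
    ktdn (inflation (FF)) k = k * (n + m) := by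
  haveI : NeZero n := ⟨by omega⟩
  haveI : NeZero m := ⟨by omega⟩
  have hkn2 : k ≤ n - 2 := by omega
  have hkm2 : k ≤ m - 2 := by omega
  set t : ℕ := (k - 1) / 2 with ht
  set eL : Fin n ≃ ZMod n :=
    (finZEquiv n).trans (Equiv.subRight ((x.val : ZMod n))) with heL
  set eR : Fin m ≃ ZMod m :=
    (finZEquiv m).trans (Equiv.subRight ((y.val : ZMod m))) with heR
  have heLx : eL x = 0 := by
    simp [heL, finZEquiv, Equiv.subRight]
  have heRy : eR y = 0 := by
    simp [heR, finZEquiv, Equiv.subRight]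
  have heLz : ∀ i, (eL i = 0 ↔ i = x) := by
    intro i
    rw [← heLx]
    exact ⟨fun h => eL.injective h, fun h => h ▸ rfl⟩
  have heRz : ∀ j, (eR j = 0 ↔ j = y) := by
    intro j
    rw [← heRy]
    exact ⟨fun h => eR.injective h, fun h => h ▸ rfl⟩
  set rL : Fin n → Fin n → Prop :=
    fun i j => circ n t (eL i) (eL j) ∨ chords n 1 (eL i) (eL j) with hrL
  set rR : Fin m → Fin m → Prop :=
    fun i j => circ m t (eR i) (eR j) ∨ chords m 1 (eR i) (eR j) with hrR
  have htn : 2 * t < n := by omega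
  have htm : 2 * t < m := by omega
  have htn2 : t < (n - 1) / 2 := by omega
  have htm2 : t < (m - 1) / 2 := by omega
  have hdL : ∀ i : Fin n, {w | mixRel x y rL rR true (inl i) w}.ncard = k := by
    intro i
    rw [mixRel_deg_left]
    have h1 : {j | rL i j}.ncard
        = {b | circ n t (eL i) b ∨ chords n 1 (eL i) b}.ncard :=
      transport_ncard eL {b | circ n t (eL i) b ∨ chords n 1 (eL i) b}
    rw [h1, ncard_or _ _ (circ_chords_disj hno (by omega) htn2 (eL i)),
      circ_card htn, chords_card_one hno (by omega)]
    by_cases hix : i = x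
    · rw [if_pos ((heLz i).mpr hix), if_pos ⟨rfl, hix⟩]
      omega
    · rw [if_neg (fun hc => hix ((heLz i).mp hc)), if_neg (fun hc => hix hc.2)]
      omega
  have hdR : ∀ j : Fin m, {w | mixRel x y rL rR true (inr j) w}.ncard = k := by
    intro j
    rw [mixRel_deg_right]
    have h1 : {i | rR j i}.ncard
        = {b | circ m t (eR j) b ∨ chords m 1 (eR j) b}.ncard :=
      transport_ncard eR {b | circ m t (eR j) b ∨ chords m 1 (eR j) b}
    rw [h1, ncard_or _ _ (circ_chords_disj hmo (by omega) htm2 (eR j)),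
      circ_card htm, chords_card_one hmo (by omega)]
    by_cases hjy : j = y
    · rw [if_pos ((heRz j).mpr hjy), if_pos ⟨rfl, hjy⟩]
      omega
    · rw [if_neg (fun hc => hjy ((heRz j).mp hc)), if_neg (fun hc => hjy hc.2)]
      omega
  refine ktdn_eq_of x y (k * (n + m)) (mixRel x y rL rR true)
    (mixRel_symm x y
      (fun a b h => h.elim (fun h' => Or.inl (circ_symm _ _ h'))
        (fun h' => Or.inr (chords_symm _ _ h')))
      (fun a b h => h.elim (fun h' => Or.inl (circ_symm _ _ h'))
        (fun h' => Or.inr (chords_symm _ _ h'))))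
    (mixRel_sub x y
      (fun a b h hc => h.elim (fun h' => circ_ne htn _ _ h' (by rw [hc]))
        (fun h' => chords_ne hno (by omega) _ _ h' (by rw [hc])))
      (fun a b h hc => h.elim (fun h' => circ_ne htm _ _ h' (by rw [hc]))
        (fun h' => chords_ne hmo (by omega) _ _ h' (by rw [hc]))))
    (fun v => ?_) ?_ (lower_generic x y hk (by omega) (by omega))
  · rcases v with i | j
    · rw [hdL i]
    · rw [hdR j]
  · rw [sum_deg hdL hdR]
    ring

lemma sum_deg_exc_right {f : (Fin n ⊕ Fin m) → ℕ} {cL cR : ℕ} (j0 : Fin m)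
    (hL : ∀ i : Fin n, f (inl i) = cL)
    (hR : ∀ j : Fin m, f (inr j) = cR + (if j = j0 then 1 else 0)) :
    ∑ v, f v = n * cL + m * cR + 1 := by
  rw [Fintype.sum_sum_type]
  rw [Finset.sum_congr rfl (fun i _ => hL i), Finset.sum_congr rfl (fun j _ => hR j)]
  rw [Finset.sum_add_distrib, Finset.sum_ite_eq' Finset.univ j0 (fun _ => 1)]
  simp [Finset.sum_const, mul_comm, add_assoc]

lemma sum_deg_exc_left {f : (Fin n ⊕ Fin m) → ℕ} {cL cR : ℕ} (i0 : Fin n)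
    (hL : ∀ i : Fin n, f (inl i) = cL + (if i = i0 then 1 else 0))
    (hR : ∀ j : Fin m, f (inr j) = cR) :
    ∑ v, f v = n * cL + m * cR + 1 := by
  rw [Fintype.sum_sum_type]
  rw [Finset.sum_congr rfl (fun i _ => hL i), Finset.sum_congr rfl (fun j _ => hR j)]
  rw [Finset.sum_add_distrib, Finset.sum_ite_eq' Finset.univ i0 (fun _ => 1)]
  simp [Finset.sum_const, mul_comm]
  ring

lemma val_eq_iff_eq_symm {M : ℕ} [NeZero M] (e : Fin M ≃ ZMod M) (j : Fin M) (h : ℕ)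
    (hh : h < M) : ((e j).val = h ↔ j = e.symm ((h : ℕ) : ZMod M)) := by
  constructor
  · intro hv
    apply e.injective
    rw [Equiv.apply_symm_apply, ← hv]
    exact (ZMod.natCast_rightInverse (e j)).symm
  · intro hj
    rw [hj, Equiv.apply_symm_apply, ZMod.val_cast_of_lt hh]

lemma caseD1 (hk : 2 ≤ k) (hkn : k < n) (hnm : n ≤ m) (hko : k % 2 = 1)
    (hne : n % 2 = 0) (hmo : m % 2 = 1) :
    ktdn (inflation (FF)) k = k * (n + m) + 1 := by
  haveI : NeZero n := ⟨by omega⟩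
  haveI : NeZero m := ⟨by omega⟩
  have hkm2 : k ≤ m - 2 := by omega
  set t : ℕ := (k - 1) / 2 with ht
  set eL : Fin n ≃ ZMod n := finZEquiv n with heL
  set eR : Fin m ≃ ZMod m := finZEquiv m with heR
  set rL : Fin n → Fin n → Prop :=
    fun i j => circ n t (eL i) (eL j) ∨ diamRel n (eL i) (eL j) with hrL
  set rR : Fin m → Fin m → Prop :=
    fun i j => circ m t (eR i) (eR j) ∨ chords m 0 (eR i) (eR j) with hrR
  have htn : 2 * t < n := by omega
  have htm : 2 * t < m := by omega
  have htm2 : t < (m - 1) / 2 := by omega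
  set j0 : Fin m := eR.symm ((((m - 1) / 2 : ℕ) : ZMod m)) with hj0
  have hdL : ∀ i : Fin n, {w | mixRel x y rL rR false (inl i) w}.ncard = k := by
    intro i
    rw [mixRel_deg_left, if_neg (by simp)]
    have h1 : {j | rL i j}.ncard
        = {b | circ n t (eL i) b ∨ diamRel n (eL i) b}.ncard :=
      transport_ncard eL {b | circ n t (eL i) b ∨ diamRel n (eL i) b}
    rw [h1, ncard_or _ _ (circ_diamRel_disj hne (by omega) htn (eL i)),
      circ_card htn, diamRel_card]
    omega
  have hdR : ∀ j : Fin m, {w | mixRel x y rL rR false (inr j) w}.ncard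
      = k + (if j = j0 then 1 else 0) := by
    intro j
    rw [mixRel_deg_right, if_neg (by simp)]
    have h1 : {i | rR j i}.ncard
        = {b | circ m t (eR j) b ∨ chords m 0 (eR j) b}.ncard :=
      transport_ncard eR {b | circ m t (eR j) b ∨ chords m 0 (eR j) b}
    rw [h1, ncard_or _ _ (circ_chords_disj hmo (by omega) htm2 (eR j)),
      circ_card htm, chords_card_zero hmo (by omega)]
    have hiff := val_eq_iff_eq_symm eR j ((m - 1) / 2) (by omega)
    by_cases hj : j = j0
    · rw [if_pos (hiff.mpr hj), if_pos hj]
      omega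
    · rw [if_neg (fun hc => hj (hiff.mp hc)), if_neg hj]
      omega
  refine ktdn_eq_of x y (k * (n + m) + 1) (mixRel x y rL rR false)
    (mixRel_symm x y
      (fun a b h => h.elim (fun h' => Or.inl (circ_symm _ _ h'))
        (fun h' => Or.inr (diamRel_symm hne _ _ h')))
      (fun a b h => h.elim (fun h' => Or.inl (circ_symm _ _ h'))
        (fun h' => Or.inr (chords_symm _ _ h'))))
    (mixRel_sub x y
      (fun a b h hc => h.elim (fun h' => circ_ne htn _ _ h' (by rw [hc]))
        (fun h' => diamRel_ne hne (by omega) _ _ h' (by rw [hc])))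
      (fun a b h hc => h.elim (fun h' => circ_ne htm _ _ h' (by rw [hc]))
        (fun h' => chords_ne hmo (by omega) _ _ h' (by rw [hc]))))
    (fun v => ?_) ?_
    (lower_plus x y hk hko (by omega) (by omega) (by omega))
  · rcases v with i | j
    · rw [hdL i]
    · rw [hdR j]
      omega
  · rw [sum_deg_exc_right j0 hdL hdR]
    ring

lemma caseD2 (hk : 2 ≤ k) (hkn : k < n) (hnm : n ≤ m) (hko : k % 2 = 1)
    (hno : n % 2 = 1) (hme : m % 2 = 0) :
    ktdn (inflation (FF)) k = k * (n + m) + 1 := by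
  haveI : NeZero n := ⟨by omega⟩
  haveI : NeZero m := ⟨by omega⟩
  have hkn2 : k ≤ n - 2 := by omega
  set t : ℕ := (k - 1) / 2 with ht
  set eL : Fin n ≃ ZMod n := finZEquiv n with heL
  set eR : Fin m ≃ ZMod m := finZEquiv m with heR
  set rL : Fin n → Fin n → Prop :=
    fun i j => circ n t (eL i) (eL j) ∨ chords n 0 (eL i) (eL j) with hrL
  set rR : Fin m → Fin m → Prop :=
    fun i j => circ m t (eR i) (eR j) ∨ diamRel m (eR i) (eR j) with hrR
  have htn : 2 * t < n := by omega
  have htm : 2 * t < m := by omega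
  have htn2 : t < (n - 1) / 2 := by omega
  set i0 : Fin n := eL.symm ((((n - 1) / 2 : ℕ) : ZMod n)) with hi0
  have hdL : ∀ i : Fin n, {w | mixRel x y rL rR false (inl i) w}.ncard
      = k + (if i = i0 then 1 else 0) := by
    intro i
    rw [mixRel_deg_left, if_neg (by simp)]
    have h1 : {j | rL i j}.ncard
        = {b | circ n t (eL i) b ∨ chords n 0 (eL i) b}.ncard :=
      transport_ncard eL {b | circ n t (eL i) b ∨ chords n 0 (eL i) b}
    rw [h1, ncard_or _ _ (circ_chords_disj hno (by omega) htn2 (eL i)),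
      circ_card htn, chords_card_zero hno (by omega)]
    have hiff := val_eq_iff_eq_symm eL i ((n - 1) / 2) (by omega)
    by_cases hi : i = i0
    · rw [if_pos (hiff.mpr hi), if_pos hi]
      omega
    · rw [if_neg (fun hc => hi (hiff.mp hc)), if_neg hi]
      omega
  have hdR : ∀ j : Fin m, {w | mixRel x y rL rR false (inr j) w}.ncard = k := by
    intro j
    rw [mixRel_deg_right, if_neg (by simp)]
    have h1 : {i | rR j i}.ncard
        = {b | circ m t (eR j) b ∨ diamRel m (eR j) b}.ncard :=
      transport_ncard eR {b | circ m t (eR j) b ∨ diamRel m (eR j) b}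
    rw [h1, ncard_or _ _ (circ_diamRel_disj hme (by omega) htm (eR j)),
      circ_card htm, diamRel_card]
    omega
  refine ktdn_eq_of x y (k * (n + m) + 1) (mixRel x y rL rR false)
    (mixRel_symm x y
      (fun a b h => h.elim (fun h' => Or.inl (circ_symm _ _ h'))
        (fun h' => Or.inr (chords_symm _ _ h')))
      (fun a b h => h.elim (fun h' => Or.inl (circ_symm _ _ h'))
        (fun h' => Or.inr (diamRel_symm hme _ _ h'))))
    (mixRel_sub x y
      (fun a b h hc => h.elim (fun h' => circ_ne htn _ _ h' (by rw [hc]))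
        (fun h' => chords_ne hno (by omega) _ _ h' (by rw [hc])))
      (fun a b h hc => h.elim (fun h' => circ_ne htm _ _ h' (by rw [hc]))
        (fun h' => diamRel_ne hme (by omega) _ _ h' (by rw [hc]))))
    (fun v => ?_) ?_
    (lower_plus x y hk hko (by omega) (by omega) (by omega))
  · rcases v with i | j
    · rw [hdL i]
      omega
    · rw [hdR j]
  · rw [sum_deg_exc_left i0 hdL hdR]
    ring

/-- **Proposition (two complete graphs joined by a cut-edge).** Let `2 ≤ k < n ≤ m` and let
`F` be obtained from the disjoint union of `K_n` and `K_m` by adding a cut-edge. Then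
`γ_{×k,t}(F_I) = k(n+m) + 1` if `k` is odd and `n ≡ m + 1 (mod 2)`, and `= k(n+m)`
otherwise. -/
theorem stmt11 (n m k : ℕ) (hk : 2 ≤ k) (hkn : k < n) (hnm : n ≤ m)
    (x : Fin n) (y : Fin m) :
    (Odd k ∧ n % 2 = (m + 1) % 2 →
      ktdn (inflation (joinByEdge (⊤ : SimpleGraph (Fin n)) (⊤ : SimpleGraph (Fin m)) x y)) k
        = k * (n + m) + 1) ∧
    (¬ (Odd k ∧ n % 2 = (m + 1) % 2) →
      ktdn (inflation (joinByEdge (⊤ : SimpleGraph (Fin n)) (⊤ : SimpleGraph (Fin m)) x y)) k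
        = k * (n + m)) := by
  constructor
  · rintro ⟨hko, hpar⟩
    have hko' : k % 2 = 1 := Nat.odd_iff.mp hko
    rcases Nat.even_or_odd n with hn2 | hn2
    · exact caseD1 x y hk hkn hnm hko' (Nat.even_iff.mp hn2) (by
        have := Nat.even_iff.mp hn2; omega)
    · exact caseD2 x y hk hkn hnm hko' (Nat.odd_iff.mp hn2) (by
        have := Nat.odd_iff.mp hn2; omega)
  · intro hnot
    rcases Nat.even_or_odd k with hk2 | hk2
    · exact caseA x y hk hkn hnm (Nat.even_iff.mp hk2)
    · have hko' : k % 2 = 1 := Nat.odd_iff.mp hk2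
      have hpar : n % 2 = m % 2 := by
        by_contra hc
        exact hnot ⟨hk2, by omega⟩
      rcases Nat.even_or_odd n with hn2 | hn2
      · have hne := Nat.even_iff.mp hn2
        exact caseB x y hk hkn hnm hko' hne (by omega)
      · have hno := Nat.odd_iff.mp hn2
        exact caseC x y hk hkn hnm hko' hno (by omega)

end cases
end

section
/- Let 2 ≤ k < n ≤ m be integers and let F be a graph with a cut-edge e such that the two components of F − e are G = K_n and H = K_m. Then γ_{×k,t}(F_I) = γ_{×k,t}(G_I) + γ_{×k,t}(H_I) − 2 if k, m and n are all odd, and γ_{×k,t}(F_I) = γ_{×k,t}(G_I) + γ_{×k,t}(H_I) otherwise. -/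
open SimpleGraph

namespace Aux

instance dartFinite {V : Type*} [Finite V] (G : SimpleGraph V) : Finite G.Dart :=
  Finite.of_injective _ SimpleGraph.Dart.toProd_injective

variable {V : Type*} {G : SimpleGraph V}

/-- the clique of darts emanating from `x` -/
def X (G : SimpleGraph V) (x : V) : Set G.Dart := {d | d.fst = x}

lemma inflation_adj {d e : G.Dart} :
    (inflation G).Adj d e ↔ d ≠ e ∧ (d.fst = e.fst ∨ e = d.symm) := by
  simp only [inflation, fromRel_adj]
  constructor
  · rintro ⟨hne, h | h⟩
    · rcases h with h | h
      · exact ⟨hne, Or.inl h⟩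
      · refine ⟨hne, Or.inr (SimpleGraph.Dart.ext _ _ ?_)⟩
        rw [SimpleGraph.Dart.symm_toProd, h, Prod.swap_swap]
    · rcases h with h | h
      · exact ⟨hne, Or.inl h.symm⟩
      · exact ⟨hne, Or.inr (SimpleGraph.Dart.ext _ _ h)⟩
  · rintro ⟨hne, h | h⟩
    · exact ⟨hne, Or.inl (Or.inl h)⟩
    · subst h
      exact ⟨hne, Or.inl (Or.inr rfl)⟩

lemma mem_neighborSet_inflation {d e : G.Dart} :
    e ∈ (inflation G).neighborSet d ↔ e ≠ d ∧ (e.fst = d.fst ∨ e = d.symm) := by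
  rw [SimpleGraph.mem_neighborSet, inflation_adj]
  constructor
  · rintro ⟨h1, h2 | h2⟩
    · exact ⟨h1.symm, Or.inl h2.symm⟩
    · exact ⟨fun h => by simp [h] at h2; exact SimpleGraph.Dart.symm_ne d h2.symm, Or.inr h2⟩
  · rintro ⟨h1, h2 | h2⟩
    · exact ⟨h1.symm, Or.inl h2.symm⟩
    · subst h2
      exact ⟨(SimpleGraph.Dart.symm_ne d).symm, Or.inr rfl⟩

lemma neighborSet_inflation_eq (d : G.Dart) :
    (inflation G).neighborSet d = ((X G d.fst) \ {d}) ∪ {d.symm} := by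
  ext e
  rw [mem_neighborSet_inflation]
  simp only [Set.mem_union, Set.mem_diff, Set.mem_singleton_iff, X, Set.mem_setOf_eq]
  constructor
  · rintro ⟨h1, h2 | h2⟩
    · exact Or.inl ⟨h2, h1⟩
    · exact Or.inr h2
  · rintro (⟨h1, h2⟩ | h)
    · exact ⟨h2, Or.inl h1⟩
    · refine ⟨?_, Or.inr h⟩
      subst h; exact SimpleGraph.Dart.symm_ne d

lemma symm_fst_ne_fst (d : G.Dart) : d.symm.fst ≠ d.fst := d.snd_ne_fst

lemma symm_not_mem_X (d : G.Dart) : d.symm ∉ X G d.fst := symm_fst_ne_fst d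

/-- sufficient condition: symm-closed with at least k per clique -/
lemma isKTDS_of_symm_closed [Finite V] (k : ℕ) (hk : 1 ≤ k) (S : Set G.Dart)
    (hsymm : ∀ d ∈ S, d.symm ∈ S)
    (hcount : ∀ x : V, k ≤ (S ∩ X G x).ncard) :
    IsKTDS (inflation G) k S := by
  intro d
  rw [neighborSet_inflation_eq]
  by_cases hd : d ∈ S
  · have hsub : ((S ∩ X G d.fst) \ {d}) ∪ {d.symm} ⊆ S ∩ ((X G d.fst \ {d}) ∪ {d.symm}) := by
      rintro e (⟨⟨heS, heX⟩, hne⟩ | he)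
      · exact ⟨heS, Or.inl ⟨heX, hne⟩⟩
      · rw [Set.mem_singleton_iff] at he; subst he
        exact ⟨hsymm d hd, Or.inr rfl⟩
    refine le_trans ?_ (Set.ncard_le_ncard hsub (Set.toFinite _))
    have hdisj : Disjoint ((S ∩ X G d.fst) \ {d}) ({d.symm} : Set G.Dart) := by
      rw [Set.disjoint_singleton_right]
      rintro ⟨⟨-, hX⟩, -⟩
      exact symm_not_mem_X d hX
    have hmem : d ∈ S ∩ X G d.fst := ⟨hd, rfl⟩
    rw [Set.ncard_union_eq hdisj (Set.toFinite _) (Set.toFinite _),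
      Set.ncard_diff_singleton_of_mem hmem, Set.ncard_singleton]
    have := hcount d.fst
    omega
  · have hsub : S ∩ X G d.fst ⊆ S ∩ ((X G d.fst \ {d}) ∪ {d.symm}) := by
      rintro e ⟨heS, heX⟩
      exact ⟨heS, Or.inl ⟨heX, fun h => hd (h ▸ heS)⟩⟩
    exact le_trans (hcount d.fst) (Set.ncard_le_ncard hsub (Set.toFinite _))

/-- necessary: every clique contains at least k vertices of any KTDS -/
lemma clique_lower [Finite V] (k : ℕ) (hk : 2 ≤ k) (S : Set G.Dart)
    (hS : IsKTDS (inflation G) k S) (x : V) (hx : ∃ d : G.Dart, d.fst = x) :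
    k ≤ (S ∩ X G x).ncard := by
  by_contra hlt
  push_neg at hlt
  have key : ∀ d : G.Dart, d.fst = x →
      (S ∩ (inflation G).neighborSet d).ncard ≤ (S ∩ X G x).ncard + 1 := by
    intro d hd
    rw [neighborSet_inflation_eq, hd]
    have hsub : S ∩ ((X G x \ {d}) ∪ {d.symm}) ⊆ (S ∩ X G x) ∪ {d.symm} := by
      rintro e ⟨heS, (⟨h1, -⟩ | h2)⟩
      · exact Or.inl ⟨heS, h1⟩
      · exact Or.inr h2
    calc (S ∩ ((X G x \ {d}) ∪ {d.symm})).ncard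
        ≤ ((S ∩ X G x) ∪ {d.symm}).ncard := Set.ncard_le_ncard hsub (Set.toFinite _)
      _ ≤ (S ∩ X G x).ncard + ({d.symm} : Set G.Dart).ncard :=
          Set.ncard_union_le _ _
      _ = (S ∩ X G x).ncard + 1 := by rw [Set.ncard_singleton]
  rcases (S ∩ X G x).eq_empty_or_nonempty with hemp | ⟨d, hd⟩
  · obtain ⟨d, hd⟩ := hx
    have := hS d
    have h2 := key d hd
    rw [hemp] at h2
    simp only [Set.ncard_empty, zero_add] at h2
    omega
  · have hdS : d ∈ S := hd.1
    have hdX : d.fst = x := hd.2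
    have h1 := hS d
    have h2 := key d hdX
    -- refine: since d ∈ S ∩ X, neighbors within clique miss d itself
    have h3 : (S ∩ (inflation G).neighborSet d).ncard ≤ (S ∩ X G x).ncard := by
      rw [neighborSet_inflation_eq, hdX]
      have hsub : S ∩ ((X G x \ {d}) ∪ {d.symm}) ⊆ ((S ∩ X G x) \ {d}) ∪ {d.symm} := by
        rintro e ⟨heS, (⟨h1', h2'⟩ | h2')⟩
        · exact Or.inl ⟨⟨heS, h1'⟩, h2'⟩
        · exact Or.inr h2'
      calc (S ∩ ((X G x \ {d}) ∪ {d.symm})).ncard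
          ≤ (((S ∩ X G x) \ {d}) ∪ {d.symm}).ncard := Set.ncard_le_ncard hsub (Set.toFinite _)
        _ ≤ ((S ∩ X G x) \ {d}).ncard + 1 := by
            refine le_trans (Set.ncard_union_le _ _) ?_
            rw [Set.ncard_singleton]
        _ ≤ ((S ∩ X G x).ncard - 1) + 1 := by
            rw [Set.ncard_diff_singleton_of_mem (Set.mem_inter hdS hdX)]
        _ ≤ (S ∩ X G x).ncard := by
            have : 0 < (S ∩ X G x).ncard :=
              (Set.ncard_pos (Set.toFinite _)).mpr ⟨d, hdS, hdX⟩
            omega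
    omega

/-- if KTDS has exactly k per clique, it is symm-closed -/
lemma symm_closed_of_exact [Finite V] (k : ℕ) (hk : 1 ≤ k) (S : Set G.Dart)
    (hS : IsKTDS (inflation G) k S)
    (hexact : ∀ x : V, (S ∩ X G x).ncard ≤ k) :
    ∀ d ∈ S, d.symm ∈ S := by
  intro d hd
  by_contra hns
  have h1 := hS d
  rw [neighborSet_inflation_eq] at h1
  have hsub : S ∩ ((X G d.fst \ {d}) ∪ {d.symm}) ⊆ (S ∩ X G d.fst) \ {d} := by
    rintro e ⟨heS, (⟨h1', h2'⟩ | h2')⟩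
    · exact ⟨⟨heS, h1'⟩, h2'⟩
    · rw [Set.mem_singleton_iff] at h2'; subst h2'; exact absurd heS hns
  have h2 : (S ∩ ((X G d.fst \ {d}) ∪ {d.symm})).ncard ≤ (S ∩ X G d.fst).ncard - 1 := by
    have hmem : d ∈ S ∩ X G d.fst := ⟨hd, rfl⟩
    refine le_trans (Set.ncard_le_ncard hsub (Set.toFinite _)) ?_
    rw [Set.ncard_diff_singleton_of_mem hmem]
  have h3 := hexact d.fst
  have h4 : 0 < (S ∩ X G d.fst).ncard :=
    (Set.ncard_pos (Set.toFinite _)).mpr ⟨d, hd, rfl⟩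
  omega


/-- cardinality decomposes as a sum over the cliques indexed by a vertex subset -/
lemma ncard_eq_sum_over [Fintype V] [DecidableEq V] (S : Set G.Dart) (A : Finset V) :
    (S ∩ {d : G.Dart | d.fst ∈ A}).ncard = ∑ x ∈ A, (S ∩ X G x).ncard := by
  classical
  have hfin : (S ∩ {d : G.Dart | d.fst ∈ A}).Finite := Set.toFinite _
  rw [Set.ncard_eq_toFinset_card _ hfin]
  rw [Finset.card_eq_sum_card_fiberwise (f := fun d : G.Dart => d.fst) (t := A)
    (fun d hd => by simpa using (hfin.mem_toFinset.mp hd).2)]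
  refine Finset.sum_congr rfl fun x hx => ?_
  rw [Set.ncard_eq_toFinset_card (S ∩ X G x) (Set.toFinite _)]
  congr 1
  ext d
  simp only [Finset.mem_filter, Set.Finite.mem_toFinset, Set.mem_inter_iff, Set.mem_setOf_eq, X]
  constructor
  · rintro ⟨⟨h1, -⟩, h3⟩; exact ⟨h1, h3⟩
  · rintro ⟨h1, h2⟩; exact ⟨⟨h1, h2 ▸ hx⟩, h2⟩

lemma ncard_eq_sum [Fintype V] [DecidableEq V] (S : Set G.Dart) :
    S.ncard = ∑ x : V, (S ∩ X G x).ncard := by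
  have := ncard_eq_sum_over (G := G) S Finset.univ
  simpa using this

lemma even_card_invol {α : Type*} [DecidableEq α] (f : α → α) (hf : ∀ a, f (f a) = a)
    (hne : ∀ a, f a ≠ a) :
    ∀ T : Finset α, (∀ a ∈ T, f a ∈ T) → Even T.card := by
  intro T
  induction T using Finset.strongInduction with
  | _ T ih =>
    intro hcl
    rcases T.eq_empty_or_nonempty with rfl | ⟨a, ha⟩
    · simp
    · have hfa : f a ∈ T := hcl a ha
      have hne' : f a ≠ a := hne a
      set T' := (T.erase a).erase (f a) with hT'
      have hssub : T' ⊂ T :=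
        Finset.ssubset_of_subset_of_ssubset (Finset.erase_subset _ _)
          (Finset.erase_ssubset ha)
      have hclosed : ∀ b ∈ T', f b ∈ T' := by
        intro b hb
        have hbT : b ∈ T := Finset.mem_of_mem_erase (Finset.mem_of_mem_erase hb)
        have hba : b ≠ a := Finset.ne_of_mem_erase (Finset.mem_of_mem_erase hb)
        have hbfa : b ≠ f a := Finset.ne_of_mem_erase hb
        refine Finset.mem_erase.mpr ⟨?_, Finset.mem_erase.mpr ⟨?_, hcl b hbT⟩⟩
        · intro h
          exact hba (by rw [← hf b, h, hf])
        · intro h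
          exact hbfa (by rw [← hf b, h])
      have h2 : 1 < T.card := Finset.one_lt_card.mpr ⟨a, ha, f a, hfa, (hne a).symm⟩
      have hcard : T.card = T'.card + 2 := by
        rw [hT', Finset.card_erase_of_mem (Finset.mem_erase.mpr ⟨hne', hfa⟩),
          Finset.card_erase_of_mem ha]
        omega
      rw [hcard]
      exact (ih T' hssub hclosed).add even_two

lemma even_ncard_symm_closed {α : Type*} [Finite α] {H : SimpleGraph α} (S : Set H.Dart)
    (h : ∀ d ∈ S, d.symm ∈ S) : Even S.ncard := by
  classical
  rw [Set.ncard_eq_toFinset_card S (Set.toFinite S)]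
  refine even_card_invol SimpleGraph.Dart.symm SimpleGraph.Dart.symm_symm
    SimpleGraph.Dart.symm_ne _ ?_
  intro d hd
  rw [Set.Finite.mem_toFinset] at *
  exact h d hd

/-- counting darts from `a` in a dart set defined by an edge predicate -/
lemma count_X_eq {P : V → V → Prop} (hP : ∀ a b, P a b → G.Adj a b) (a : V) :
    ({d : G.Dart | P d.fst d.snd} ∩ X G a).ncard = {b | P a b}.ncard := by
  have himg : (fun d : G.Dart => d.snd) '' ({d : G.Dart | P d.fst d.snd} ∩ X G a)
      = {b | P a b} := by
    ext b
    constructor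
    · rintro ⟨d, ⟨hd, hfst⟩, rfl⟩
      have : d.fst = a := hfst
      rw [← this]
      exact hd
    · intro hb
      exact ⟨⟨(a, b), hP a b hb⟩, ⟨hb, rfl⟩, rfl⟩
  rw [← himg, Set.ncard_image_of_injOn]
  intro d1 h1 d2 h2 hsnd
  refine SimpleGraph.Dart.ext _ _ (Prod.ext ?_ hsnd)
  exact (h1.2 : d1.fst = a).trans (h2.2 : d2.fst = a).symm

lemma ktdn_eq {W : Type*} (H : SimpleGraph W) (k val : ℕ)
    (hex : ∃ S : Set W, IsKTDS H k S ∧ S.ncard = val)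
    (hlow : ∀ S : Set W, IsKTDS H k S → val ≤ S.ncard) :
    ktdn H k = val := by
  refine le_antisymm (Nat.sInf_le hex) (le_csInf ⟨val, hex⟩ ?_)
  rintro b ⟨S, hS, rfl⟩
  exact hlow S hS

lemma forall_eq_of_sum_le {α : Type*} (s : Finset α) (f : α → ℕ) (k : ℕ)
    (hge : ∀ i ∈ s, k ≤ f i) (hsum : ∑ i ∈ s, f i ≤ k * s.card) :
    ∀ i ∈ s, f i = k := by
  by_contra h
  push_neg at h
  obtain ⟨j, hj, hne⟩ := h
  have hlt : ∑ i ∈ s, k < ∑ i ∈ s, f i :=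
    Finset.sum_lt_sum hge ⟨j, hj, lt_of_le_of_ne (hge j hj) (Ne.symm hne)⟩
  rw [Finset.sum_const, smul_eq_mul, mul_comm] at hlt
  omega


/-! ### Constructions on `Fin q` -/

/-- offset values for a near-`k`-regular circulant on `q` vertices -/
def Jbase (k q : ℕ) : Finset ℕ :=
  (Finset.Icc 1 (k/2) ∪ Finset.Icc (q - k/2) (q-1)) ∪
    (if k % 2 = 1 ∧ q % 2 = 0 then {q/2} else ∅)

lemma mem_Jbase {k q j : ℕ} : j ∈ Jbase k q ↔
    ((1 ≤ j ∧ j ≤ k/2) ∨ (q - k/2 ≤ j ∧ j ≤ q-1) ∨ (k % 2 = 1 ∧ q % 2 = 0 ∧ j = q/2)) := by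
  unfold Jbase
  by_cases h : k % 2 = 1 ∧ q % 2 = 0 <;>
    simp [h, Finset.mem_union, Finset.mem_Icc] <;> tauto

lemma Jbase_bounds {k q j : ℕ} (hk : 2 ≤ k) (hkq : k < q) (hj : j ∈ Jbase k q) :
    1 ≤ j ∧ j ≤ q - 1 := by
  rw [mem_Jbase] at hj
  rcases hj with ⟨h1, h2⟩ | ⟨h1, h2⟩ | ⟨h1, h2, h3⟩ <;> omega

lemma Jbase_symm {k q j : ℕ} (hk : 2 ≤ k) (hkq : k < q) (hj : j ∈ Jbase k q) :
    q - j ∈ Jbase k q := by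
  rw [mem_Jbase] at hj ⊢
  rcases hj with ⟨h1, h2⟩ | ⟨h1, h2⟩ | ⟨h1, h2, h3⟩ <;> omega

lemma card_Jbase {k q : ℕ} (hk : 2 ≤ k) (hkq : k < q) :
    (Jbase k q).card = if k % 2 = 1 ∧ q % 2 = 1 then k - 1 else k := by
  have hd1 : Disjoint (Finset.Icc 1 (k/2)) (Finset.Icc (q - k/2) (q-1)) := by
    rw [Finset.disjoint_left]
    intro j h1 h2
    rw [Finset.mem_Icc] at h1 h2
    omega
  have hcu : (Finset.Icc 1 (k/2) ∪ Finset.Icc (q - k/2) (q-1)).card = k/2 + k/2 := by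
    rw [Finset.card_union_of_disjoint hd1, Nat.card_Icc, Nat.card_Icc]
    omega
  unfold Jbase
  by_cases h : k % 2 = 1 ∧ q % 2 = 0
  · rw [if_pos h]
    have hnm : q/2 ∉ Finset.Icc 1 (k/2) ∪ Finset.Icc (q - k/2) (q-1) := by
      rw [Finset.mem_union, Finset.mem_Icc, Finset.mem_Icc]
      omega
    rw [Finset.card_union_of_disjoint (by simpa using hnm), hcu]
    simp only [Finset.card_singleton]
    have : ¬ (k % 2 = 1 ∧ q % 2 = 1) := by omega
    rw [if_neg this]
    omega
  · rw [if_neg h]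
    simp only [Finset.union_empty, hcu]
    by_cases h2 : k % 2 = 1 ∧ q % 2 = 1
    · rw [if_pos h2]; omega
    · rw [if_neg h2]; omega

open scoped Fin.NatCast Fin.IntCast Fin.CommRing

section FinQ

variable {q : ℕ} [NeZero q]

lemma val_add_of_lt' (a b : Fin q) (h : a.val + b.val < q) : (a + b).val = a.val + b.val := by
  rw [Fin.add_def]
  exact Nat.mod_eq_of_lt h

lemma neg_cast_eq {j : ℕ} (hj : j ≤ q) : -((j : ℕ) : Fin q) = ((q - j : ℕ) : Fin q) := by
  have h : ((j : ℕ) : Fin q) + ((q - j : ℕ) : Fin q) = 0 := by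
    rw [← Nat.cast_add]
    have : j + (q - j) = q := by omega
    rw [this, Fin.natCast_self]
  exact neg_eq_of_add_eq_zero_right h

/-- the circulant offset set inside `Fin q` -/
def OFin (k q : ℕ) [NeZero q] : Finset (Fin q) := (Jbase k q).image (Nat.cast)

lemma mem_OFin {k : ℕ} (hk : 2 ≤ k) (hkq : k < q) {o : Fin q} :
    o ∈ OFin k q ↔ o.val ∈ Jbase k q := by
  constructor
  · rintro ho
    rw [OFin, Finset.mem_image] at ho
    obtain ⟨j, hj, rfl⟩ := ho
    have hb := Jbase_bounds hk hkq hj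
    rw [Fin.val_cast_of_lt (by omega)]
    exact hj
  · intro h
    rw [OFin, Finset.mem_image]
    exact ⟨o.val, h, Fin.cast_val_eq_self o⟩

lemma card_OFin {k : ℕ} (hk : 2 ≤ k) (hkq : k < q) : (OFin k q).card = (Jbase k q).card := by
  rw [OFin]
  apply Finset.card_image_of_injOn
  intro i hi j hj hij
  have hbi := Jbase_bounds hk hkq hi
  have hbj := Jbase_bounds hk hkq hj
  have : ((i : Fin q)).val = ((j : Fin q)).val := by rw [hij]
  rwa [Fin.val_cast_of_lt (by omega), Fin.val_cast_of_lt (by omega)] at this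

lemma zero_not_mem_OFin {k : ℕ} (hk : 2 ≤ k) (hkq : k < q) : (0 : Fin q) ∉ OFin k q := by
  rw [mem_OFin hk hkq]
  intro h
  have := Jbase_bounds hk hkq h
  simp at this

lemma neg_mem_OFin {k : ℕ} (hk : 2 ≤ k) (hkq : k < q) {o : Fin q} (ho : o ∈ OFin k q) :
    -o ∈ OFin k q := by
  rw [mem_OFin hk hkq] at ho ⊢
  have hb := Jbase_bounds hk hkq ho
  have h1 : -o = ((q - o.val : ℕ) : Fin q) := by
    rw [← neg_cast_eq (by omega), Fin.cast_val_eq_self]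
  rw [h1, Fin.val_cast_of_lt (by omega)]
  exact Jbase_symm hk hkq ho

/-- circulant edge predicate -/
def Pcirc (k q : ℕ) [NeZero q] (a b : Fin q) : Prop := b - a ∈ OFin k q

/-- near-perfect-matching edge predicate (for odd `q`), missing the vertex `x` -/
def Pmatch (q : ℕ) [NeZero q] (x a b : Fin q) : Prop :=
  (b = a + ((q/2 : ℕ) : Fin q) ∧ 1 ≤ (a - x).val ∧ (a - x).val ≤ q/2) ∨
  (a = b + ((q/2 : ℕ) : Fin q) ∧ 1 ≤ (b - x).val ∧ (b - x).val ≤ q/2)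

/-- the extra edge `{x, x + (k/2+1)}` -/
def Pextra (k q : ℕ) [NeZero q] (x a b : Fin q) : Prop :=
  (a = x ∧ b = x + ((k/2 + 1 : ℕ) : Fin q)) ∨ (b = x ∧ a = x + ((k/2 + 1 : ℕ) : Fin q))

lemma Pcirc_symm {k : ℕ} (hk : 2 ≤ k) (hkq : k < q) {a b : Fin q} (h : Pcirc k q a b) :
    Pcirc k q b a := by
  unfold Pcirc at *
  have : a - b = -(b - a) := by ring
  rw [this]
  exact neg_mem_OFin hk hkq h

lemma Pmatch_symm {x a b : Fin q} (h : Pmatch q x a b) : Pmatch q x b a := h.symm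

lemma Pextra_symm {k : ℕ} {x a b : Fin q} (h : Pextra k q x a b) : Pextra k q x b a := by
  unfold Pextra at *; tauto

lemma Pcirc_ne {k : ℕ} (hk : 2 ≤ k) (hkq : k < q) {a b : Fin q} (h : Pcirc k q a b) :
    a ≠ b := by
  intro hab
  subst hab
  simp only [Pcirc, sub_self] at h
  exact zero_not_mem_OFin hk hkq h

lemma cast_ne_zero_of_bounds {j : ℕ} (h1 : 1 ≤ j) (h2 : j < q) : ((j : ℕ) : Fin q) ≠ 0 := by
  intro h
  have : ((j : ℕ) : Fin q).val = 0 := by rw [h]; rfl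
  rw [Fin.val_cast_of_lt h2] at this
  omega

lemma Pmatch_ne {x a b : Fin q} (hq : q % 2 = 1) (hq3 : 3 ≤ q) (h : Pmatch q x a b) :
    a ≠ b := by
  have hcast : ((q/2 : ℕ) : Fin q) ≠ 0 := cast_ne_zero_of_bounds (by omega) (by omega)
  rintro rfl
  rcases h with ⟨h1, -⟩ | ⟨h1, -⟩ <;> exact hcast (left_eq_add.mp h1)

lemma Pextra_ne {k : ℕ} (hk : 2 ≤ k) (hkq : k < q) {x a b : Fin q} (h : Pextra k q x a b) :
    a ≠ b := by
  have hcast : ((k/2 + 1 : ℕ) : Fin q) ≠ 0 := cast_ne_zero_of_bounds (by omega) (by omega)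
  rintro rfl
  rcases h with ⟨h1, h2⟩ | ⟨h1, h2⟩ <;>
  · rw [h1] at h2
    exact hcast (left_eq_add.mp h2)


lemma ncard_setOf_sub_mem (a : Fin q) (T : Finset (Fin q)) :
    {b : Fin q | b - a ∈ T}.ncard = T.card := by
  have h : {b : Fin q | b - a ∈ T} = (fun o => a + o) '' ↑T := by
    ext b
    simp only [Set.mem_setOf_eq, Set.mem_image, Finset.mem_coe]
    constructor
    · intro h; exact ⟨b - a, h, by abel⟩
    · rintro ⟨o, ho, rfl⟩; simpa using ho
  rw [h, Set.ncard_image_of_injOn ((add_right_injective a).injOn), Set.ncard_coe_finset]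

lemma countPcirc {k : ℕ} (hk : 2 ≤ k) (hkq : k < q) (a : Fin q) :
    {b : Fin q | Pcirc k q a b}.ncard = (Jbase k q).card := by
  rw [show {b : Fin q | Pcirc k q a b} = {b : Fin q | b - a ∈ OFin k q} from rfl,
    ncard_setOf_sub_mem, card_OFin hk hkq]

lemma not_Pmatch_at_x (hq : q % 2 = 1) (hq3 : 3 ≤ q) (x b : Fin q) : ¬ Pmatch q x x b := by
  rintro (⟨h1, h2, h3⟩ | ⟨h1, h2, h3⟩)
  · simp at h2
  · have hval : ((q/2 : ℕ) : Fin q).val = q/2 := Fin.val_cast_of_lt (by omega)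
    have heq : x - x = (b - x) + ((q/2 : ℕ) : Fin q) := by rw [h1]; ring
    rw [sub_self] at heq
    have hlt : (b - x).val + ((q/2 : ℕ) : Fin q).val < q := by rw [hval]; omega
    have := val_add_of_lt' (b - x) _ hlt
    rw [← heq] at this
    simp only [Fin.val_zero] at this
    rw [hval] at this
    omega

lemma countPmatch (hq : q % 2 = 1) (hq3 : 3 ≤ q) (x a : Fin q) :
    {b : Fin q | Pmatch q x a b}.ncard = if a = x then 0 else 1 := by
  have hval : ((q/2 : ℕ) : Fin q).val = q/2 := Fin.val_cast_of_lt (by omega)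
  by_cases hax : a = x
  · subst hax
    rw [if_pos rfl]
    have : {b : Fin q | Pmatch q a a b} = ∅ := by
      ext b; simpa using not_Pmatch_at_x hq hq3 a b
    rw [this, Set.ncard_empty]
  · rw [if_neg hax]
    have huv1 : 1 ≤ (a - x).val := by
      have h0 : a - x ≠ 0 := sub_ne_zero.mpr hax
      have h1 : (a - x).val ≠ 0 := by
        intro h
        exact h0 (Fin.ext (by simp [h]))
      omega
    have huv2 : (a - x).val ≤ q - 1 := by omega
    by_cases hle : (a - x).val ≤ q / 2
    · have hset : {b : Fin q | Pmatch q x a b} = {a + ((q/2 : ℕ) : Fin q)} := by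
        ext b
        simp only [Set.mem_setOf_eq, Set.mem_singleton_iff]
        constructor
        · rintro (⟨h1, -, -⟩ | ⟨h1, h2, h3⟩)
          · exact h1
          · exfalso
            have heq : a - x = (b - x) + ((q/2 : ℕ) : Fin q) := by rw [h1]; ring
            have hlt : (b - x).val + ((q/2 : ℕ) : Fin q).val < q := by rw [hval]; omega
            have := val_add_of_lt' (b - x) _ hlt
            rw [← heq, hval] at this
            omega
        · rintro rfl
          exact Or.inl ⟨rfl, huv1, hle⟩
      rw [hset, Set.ncard_singleton]
    · push_neg at hle
      have hset : {b : Fin q | Pmatch q x a b} = {a - ((q/2 : ℕ) : Fin q)} := by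
        ext b
        simp only [Set.mem_setOf_eq, Set.mem_singleton_iff]
        constructor
        · rintro (⟨h1, h2, h3⟩ | ⟨h1, -, -⟩)
          · omega
          · rw [h1]; ring
        · rintro rfl
          refine Or.inr ⟨by ring, ?_, ?_⟩ <;>
          · have heq : (a - ((q/2 : ℕ) : Fin q) - x) + ((q/2 : ℕ) : Fin q) = a - x := by ring
            by_cases hlt : (a - ((q/2 : ℕ) : Fin q) - x).val + q/2 < q
            · have := val_add_of_lt' (a - ((q/2 : ℕ) : Fin q) - x) ((q/2 : ℕ) : Fin q)
                (by rw [hval]; omega)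
              rw [heq, hval] at this
              omega
            · exfalso
              push_neg at hlt
              have hv : (a - x).val = ((a - ((q/2 : ℕ) : Fin q) - x).val + q/2) % q := by
                conv_lhs => rw [← heq]
                simp [Fin.add_def, hval]
              rw [Nat.mod_eq_sub_mod hlt, Nat.mod_eq_of_lt (by
                have := (a - ((q/2 : ℕ) : Fin q) - x).isLt
                omega)] at hv
              have := (a - ((q/2 : ℕ) : Fin q) - x).isLt
              omega
      rw [hset, Set.ncard_singleton]

lemma countPextra {k : ℕ} (hk : 2 ≤ k) (hkq : k < q) (x a : Fin q) :
    {b : Fin q | Pextra k q x a b}.ncard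
      = if a = x ∨ a = x + ((k/2 + 1 : ℕ) : Fin q) then 1 else 0 := by
  have hcast : ((k/2 + 1 : ℕ) : Fin q) ≠ 0 := cast_ne_zero_of_bounds (by omega) (by omega)
  have hxw : x ≠ x + ((k/2 + 1 : ℕ) : Fin q) := by
    intro h; exact hcast (left_eq_add.mp h)
  by_cases h1 : a = x
  · subst h1
    rw [if_pos (Or.inl rfl)]
    have : {b : Fin q | Pextra k q a a b} = {a + ((k/2 + 1 : ℕ) : Fin q)} := by
      ext b
      simp only [Set.mem_setOf_eq, Set.mem_singleton_iff]
      constructor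
      · rintro (⟨-, h⟩ | ⟨-, h⟩)
        · exact h
        · exact absurd h hxw
      · intro h; exact Or.inl ⟨rfl, h⟩
    rw [this, Set.ncard_singleton]
  · by_cases h2 : a = x + ((k/2 + 1 : ℕ) : Fin q)
    · rw [if_pos (Or.inr h2)]
      have : {b : Fin q | Pextra k q x a b} = {x} := by
        ext b
        simp only [Set.mem_setOf_eq, Set.mem_singleton_iff]
        constructor
        · rintro (⟨h, -⟩ | ⟨h, -⟩)
          · exact absurd h h1
          · exact h
        · intro h; exact Or.inr ⟨h, h2⟩
      rw [this, Set.ncard_singleton]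
    · rw [if_neg (by tauto)]
      have : {b : Fin q | Pextra k q x a b} = ∅ := by
        ext b
        simp only [Set.mem_setOf_eq, Set.mem_empty_iff_false, iff_false]
        rintro (⟨h, -⟩ | ⟨-, h⟩)
        · exact h1 h
        · exact h2 h
      rw [this, Set.ncard_empty]

end FinQ


section FinQ2

variable {q k : ℕ} [NeZero q]

lemma ncard_setOf_or_of_disj {α : Type*} [Finite α] {P Q : α → Prop} (h : ∀ b, P b → ¬ Q b) :
    {b | P b ∨ Q b}.ncard = {b | P b}.ncard + {b | Q b}.ncard := by
  rw [Set.setOf_or, Set.ncard_union_eq ?_ (Set.toFinite _) (Set.toFinite _)]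
  rw [Set.disjoint_left]
  intro b hb hb2
  exact h b hb hb2

lemma Pmatch_not_Pcirc (hk : 2 ≤ k) (hkq : k < q) (hko : k % 2 = 1) (hqo : q % 2 = 1)
    {x a b : Fin q} (hm : Pmatch q x a b) : ¬ Pcirc k q a b := by
  intro hc
  have hv : (b - a).val ∈ Jbase k q := (mem_OFin hk hkq).mp hc
  rcases hm with ⟨h1, -, -⟩ | ⟨h1, -, -⟩
  · have h2 : b - a = ((q/2 : ℕ) : Fin q) := by rw [h1]; ring
    rw [h2, Fin.val_cast_of_lt (by omega), mem_Jbase] at hv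
    omega
  · have h2 : b - a = -((q/2 : ℕ) : Fin q) := by rw [h1]; ring
    rw [neg_cast_eq (by omega)] at h2
    rw [h2, Fin.val_cast_of_lt (by omega), mem_Jbase] at hv
    omega

lemma Pextra_not_Pcirc (hk : 2 ≤ k) (hkq : k < q) (hko : k % 2 = 1) (hqo : q % 2 = 1)
    {x a b : Fin q} (he : Pextra k q x a b) : ¬ Pcirc k q a b := by
  intro hc
  have hqk : k + 2 ≤ q := by omega
  have hv : (b - a).val ∈ Jbase k q := (mem_OFin hk hkq).mp hc
  rcases he with ⟨rfl, rfl⟩ | ⟨rfl, rfl⟩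
  · have h2 : a + ((k/2 + 1 : ℕ) : Fin q) - a = ((k/2 + 1 : ℕ) : Fin q) := by ring
    rw [h2, Fin.val_cast_of_lt (by omega), mem_Jbase] at hv
    omega
  · have h2 : b - (b + ((k/2 + 1 : ℕ) : Fin q)) = -((k/2 + 1 : ℕ) : Fin q) := by ring
    rw [neg_cast_eq (by omega)] at h2
    rw [h2, Fin.val_cast_of_lt (by omega), mem_Jbase] at hv
    omega

lemma Pextra_not_Pmatch (hk : 2 ≤ k) (hkq : k < q) (hko : k % 2 = 1) (hqo : q % 2 = 1)
    {x a b : Fin q} (he : Pextra k q x a b) : ¬ Pmatch q x a b := by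
  have hq3 : 3 ≤ q := by omega
  intro hm
  rcases he with ⟨rfl, rfl⟩ | ⟨rfl, rfl⟩
  · exact not_Pmatch_at_x hqo hq3 _ _ hm
  · rcases hm with ⟨h1, -, -⟩ | ⟨-, h2, -⟩
    · -- h1 : b = (b + cast (k/2+1)) + cast (q/2)
      have h3 : ((k/2 + 1 : ℕ) : Fin q) + ((q/2 : ℕ) : Fin q) = 0 := by
        have := h1
        rw [add_assoc] at this
        exact (left_eq_add.mp this)
      rw [← Nat.cast_add] at h3
      exact cast_ne_zero_of_bounds (by omega) (by omega) h3
    · rw [sub_self] at h2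
      simp at h2

end FinQ2


section Cfg

variable {q k : ℕ} [NeZero q]

/-- deficient construction: `(k-1)`-regular circulant plus near-perfect matching missing `x` -/
def PB (k q : ℕ) [NeZero q] (x : Fin q) (a b : Fin q) : Prop :=
  Pcirc k q a b ∨ Pmatch q x a b

/-- `PB` plus one extra edge at `x` -/
def PC (k q : ℕ) [NeZero q] (x : Fin q) (a b : Fin q) : Prop :=
  PB k q x a b ∨ Pextra k q x a b

lemma PB_symm (hk : 2 ≤ k) (hkq : k < q) {x a b : Fin q} (h : PB k q x a b) :
    PB k q x b a := by
  rcases h with h | h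
  · exact Or.inl (Pcirc_symm hk hkq h)
  · exact Or.inr (Pmatch_symm h)

lemma PC_symm (hk : 2 ≤ k) (hkq : k < q) {x a b : Fin q} (h : PC k q x a b) :
    PC k q x b a := by
  rcases h with h | h
  · exact Or.inl (PB_symm hk hkq h)
  · exact Or.inr (Pextra_symm h)

lemma PB_ne (hk : 2 ≤ k) (hkq : k < q) (hqo : q % 2 = 1) {x a b : Fin q}
    (h : PB k q x a b) : a ≠ b := by
  rcases h with h | h
  · exact Pcirc_ne hk hkq h
  · exact Pmatch_ne hqo (by omega) h

lemma PC_ne (hk : 2 ≤ k) (hkq : k < q) (hqo : q % 2 = 1) {x a b : Fin q}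
    (h : PC k q x a b) : a ≠ b := by
  rcases h with h | h
  · exact PB_ne hk hkq hqo h
  · exact Pextra_ne hk hkq h

lemma countPB (hk : 2 ≤ k) (hkq : k < q) (hko : k % 2 = 1) (hqo : q % 2 = 1) (x a : Fin q) :
    {b | PB k q x a b}.ncard = if a = x then k - 1 else k := by
  have h := ncard_setOf_or_of_disj (P := fun b => Pcirc k q a b) (Q := fun b => Pmatch q x a b)
      (fun b hc hm => Pmatch_not_Pcirc hk hkq hko hqo hm hc)
  rw [show {b | PB k q x a b} = {b | Pcirc k q a b ∨ Pmatch q x a b} from rfl, h,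
    countPcirc hk hkq, card_Jbase hk hkq, if_pos ⟨hko, hqo⟩, countPmatch hqo (by omega)]
  by_cases hax : a = x <;> simp [hax] <;> omega

lemma countPC (hk : 2 ≤ k) (hkq : k < q) (hko : k % 2 = 1) (hqo : q % 2 = 1) (x a : Fin q) :
    {b | PC k q x a b}.ncard = if a = x + ((k/2 + 1 : ℕ) : Fin q) then k + 1 else k := by
  have hxw : x ≠ x + ((k/2 + 1 : ℕ) : Fin q) := by
    intro h
    exact cast_ne_zero_of_bounds (by omega) (by omega) (left_eq_add.mp h)
  have h := ncard_setOf_or_of_disj (P := fun b => PB k q x a b) (Q := fun b => Pextra k q x a b)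
      (fun b hb he => by
        rcases hb with hc | hm
        · exact Pextra_not_Pcirc hk hkq hko hqo he hc
        · exact Pextra_not_Pmatch hk hkq hko hqo he hm)
  rw [show {b | PC k q x a b} = {b | PB k q x a b ∨ Pextra k q x a b} from rfl, h,
    countPB hk hkq hko hqo, countPextra hk hkq]
  by_cases h1 : a = x
  · rw [if_pos h1, if_pos (Or.inl h1), if_neg (h1 ▸ hxw)]
    omega
  · rw [if_neg h1]
    by_cases h2 : a = x + ((k/2 + 1 : ℕ) : Fin q)
    · rw [if_pos (Or.inr h2), if_pos h2]
    · rw [if_neg (by tauto), if_neg h2]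
      omega

lemma sum_ite_single {w : Fin q} {c1 c2 : ℕ} :
    ∑ a : Fin q, (if a = w then c1 else c2) = c1 + (q - 1) * c2 := by
  rw [← Finset.sum_erase_add _ _ (Finset.mem_univ w), if_pos rfl]
  have h2 : ∑ a ∈ Finset.univ.erase w, (if a = w then c1 else c2) = (q - 1) * c2 := by
    rw [Finset.sum_congr rfl (fun a ha => if_neg (Finset.ne_of_mem_erase ha)),
      Finset.sum_const, smul_eq_mul, Finset.card_erase_of_mem (Finset.mem_univ w),
      Finset.card_univ, Fintype.card_fin]
  rw [h2, Nat.add_comm]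

lemma sumPB (hk : 2 ≤ k) (hkq : k < q) (hko : k % 2 = 1) (hqo : q % 2 = 1) (x : Fin q) :
    ∑ a : Fin q, {b | PB k q x a b}.ncard = k * q - 1 := by
  rw [Finset.sum_congr rfl (fun a _ => countPB hk hkq hko hqo x a), sum_ite_single]
  have h1 : k ≤ q * k := Nat.le_mul_of_pos_left _ (by omega)
  have h2 : (q - 1) * k = q * k - k := by rw [Nat.sub_mul, one_mul]
  have h3 : q * k = k * q := mul_comm q k
  rw [h2]
  omega

lemma sumPC (hk : 2 ≤ k) (hkq : k < q) (hko : k % 2 = 1) (hqo : q % 2 = 1) (x : Fin q) :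
    ∑ a : Fin q, {b | PC k q x a b}.ncard = k * q + 1 := by
  rw [Finset.sum_congr rfl (fun a _ => countPC hk hkq hko hqo x a), sum_ite_single]
  have h1 : k ≤ q * k := Nat.le_mul_of_pos_left _ (by omega)
  have h2 : (q - 1) * k = q * k - k := by rw [Nat.sub_mul, one_mul]
  have h3 : q * k = k * q := mul_comm q k
  rw [h2]
  omega

end Cfg

/-! ### the inflated complete graph -/

section Kq

lemma dart_symm_fst {V : Type*} {G : SimpleGraph V} (d : G.Dart) : d.symm.fst = d.snd := rfl

lemma dart_symm_snd {V : Type*} {G : SimpleGraph V} (d : G.Dart) : d.symm.snd = d.fst := rfl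

variable {q k : ℕ} [NeZero q]

lemma exists_dart_top (hq : 2 ≤ q) (x : Fin q) :
    ∃ d : (⊤ : SimpleGraph (Fin q)).Dart, d.fst = x := by
  obtain ⟨y, hy⟩ := Fintype.exists_ne_of_one_lt_card (by simp [Fintype.card_fin]; omega) x
  exact ⟨⟨(x, y), by simpa using (Ne.symm hy)⟩, rfl⟩

lemma Kq_lower (hk : 2 ≤ k) (hkq : k < q)
    (S : Set (⊤ : SimpleGraph (Fin q)).Dart) (hS : IsKTDS (inflation ⊤) k S) :
    k * q ≤ S.ncard := by
  classical
  rw [ncard_eq_sum]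
  calc k * q = ∑ _a : Fin q, k := by
        rw [Finset.sum_const, smul_eq_mul, Finset.card_univ, Fintype.card_fin, mul_comm]
    _ ≤ ∑ a, (S ∩ X ⊤ a).ncard :=
        Finset.sum_le_sum fun a _ => clique_lower k hk S hS a (exists_dart_top (by omega) a)

lemma Kq_lower_odd (hk : 2 ≤ k) (hkq : k < q) (hko : k % 2 = 1) (hqo : q % 2 = 1)
    (S : Set (⊤ : SimpleGraph (Fin q)).Dart) (hS : IsKTDS (inflation ⊤) k S) :
    k * q + 1 ≤ S.ncard := by
  classical
  have h1 := Kq_lower hk hkq S hS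
  by_contra hcon
  push_neg at hcon
  have hEq : S.ncard = k * q := by omega
  have hsum := ncard_eq_sum (G := (⊤ : SimpleGraph (Fin q))) S
  have hexact : ∀ a ∈ Finset.univ, (S ∩ X (⊤ : SimpleGraph (Fin q)) a).ncard = k := by
    apply forall_eq_of_sum_le
    · exact fun a _ => clique_lower k hk S hS a (exists_dart_top (by omega) a)
    · rw [← hsum, hEq, Finset.card_univ, Fintype.card_fin]
  have hsymm := symm_closed_of_exact k (by omega) S hS
      (fun a => (hexact a (Finset.mem_univ a)).le)
  have heven := even_ncard_symm_closed S hsymm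
  rw [hEq, Nat.even_mul, Nat.even_iff, Nat.even_iff] at heven
  omega

lemma Kq_upper_even (hk : 2 ≤ k) (hkq : k < q) (h : ¬(k % 2 = 1 ∧ q % 2 = 1)) :
    ∃ S : Set (⊤ : SimpleGraph (Fin q)).Dart,
      IsKTDS (inflation ⊤) k S ∧ S.ncard = k * q := by
  classical
  have hadj : ∀ a b : Fin q, Pcirc k q a b → (⊤ : SimpleGraph (Fin q)).Adj a b :=
    fun a b hab => by simpa using (Pcirc_ne hk hkq hab)
  have hcnt : ∀ a : Fin q,
      ({d : (⊤ : SimpleGraph (Fin q)).Dart | Pcirc k q d.fst d.snd} ∩ X ⊤ a).ncard = k := by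
    intro a
    rw [count_X_eq hadj a, countPcirc hk hkq, card_Jbase hk hkq, if_neg h]
  refine ⟨{d | Pcirc k q d.fst d.snd}, ?_, ?_⟩
  · apply isKTDS_of_symm_closed k (by omega)
    · intro d hd
      have h2 := Pcirc_symm hk hkq hd
      show Pcirc k q d.symm.fst d.symm.snd
      rw [dart_symm_fst, dart_symm_snd]
      exact h2
    · exact fun a => (hcnt a).ge
  · rw [ncard_eq_sum, Finset.sum_congr rfl (fun a _ => hcnt a), Finset.sum_const,
      smul_eq_mul, Finset.card_univ, Fintype.card_fin, mul_comm]

lemma Kq_upper_odd (hk : 2 ≤ k) (hkq : k < q) (hko : k % 2 = 1) (hqo : q % 2 = 1) :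
    ∃ S : Set (⊤ : SimpleGraph (Fin q)).Dart,
      IsKTDS (inflation ⊤) k S ∧ S.ncard = k * q + 1 := by
  classical
  set x : Fin q := 0
  have hadj : ∀ a b : Fin q, PC k q x a b → (⊤ : SimpleGraph (Fin q)).Adj a b :=
    fun a b hab => by simpa using (PC_ne hk hkq hqo hab)
  have hcnt : ∀ a : Fin q,
      ({d : (⊤ : SimpleGraph (Fin q)).Dart | PC k q x d.fst d.snd} ∩ X ⊤ a).ncard
        = {b | PC k q x a b}.ncard := fun a => count_X_eq hadj a
  refine ⟨{d | PC k q x d.fst d.snd}, ?_, ?_⟩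
  · apply isKTDS_of_symm_closed k (by omega)
    · intro d hd
      have h2 := PC_symm hk hkq hd
      show PC k q x d.symm.fst d.symm.snd
      rw [dart_symm_fst, dart_symm_snd]
      exact h2
    · intro a
      rw [hcnt a, countPC hk hkq hko hqo]
      by_cases h2 : a = x + ((k/2 + 1 : ℕ) : Fin q)
      · rw [if_pos h2]; omega
      · rw [if_neg h2]
  · rw [ncard_eq_sum, Finset.sum_congr rfl (fun a _ => hcnt a),
      sumPC hk hkq hko hqo]

theorem ktdn_Kq (k q : ℕ) (hk : 2 ≤ k) (hkq : k < q) :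
    ktdn (inflation (⊤ : SimpleGraph (Fin q))) k
      = k * q + (if k % 2 = 1 ∧ q % 2 = 1 then 1 else 0) := by
  haveI : NeZero q := ⟨by omega⟩
  by_cases h : k % 2 = 1 ∧ q % 2 = 1
  · rw [if_pos h]
    exact ktdn_eq _ _ _ (Kq_upper_odd hk hkq h.1 h.2)
      (fun S hS => Kq_lower_odd hk hkq h.1 h.2 S hS)
  · rw [if_neg h]
    simpa using ktdn_eq _ _ _ (by simpa using Kq_upper_even hk hkq h)
      (fun S hS => Kq_lower hk hkq S hS)

end Kq


/-! ### the join graph -/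

section JoinG

variable {n m : ℕ} [NeZero n] [NeZero m]

/-- `K_n` and `K_m` joined by the edge `x y` -/
def Fg (n m : ℕ) (x : Fin n) (y : Fin m) : SimpleGraph (Fin n ⊕ Fin m) :=
  joinByEdge (⊤ : SimpleGraph (Fin n)) (⊤ : SimpleGraph (Fin m)) x y

variable (x : Fin n) (y : Fin m)

lemma Fg_adj_ll {a b : Fin n} : (Fg n m x y).Adj (Sum.inl a) (Sum.inl b) ↔ a ≠ b := by
  simp [Fg, joinByEdge, fromRel_adj]
  tauto

lemma Fg_adj_rr {a b : Fin m} : (Fg n m x y).Adj (Sum.inr a) (Sum.inr b) ↔ a ≠ b := by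
  simp [Fg, joinByEdge, fromRel_adj]
  tauto

lemma Fg_adj_lr {a : Fin n} {b : Fin m} :
    (Fg n m x y).Adj (Sum.inl a) (Sum.inr b) ↔ a = x ∧ b = y := by
  simp [Fg, joinByEdge, fromRel_adj]

lemma Fg_adj_rl {a : Fin m} {b : Fin n} :
    (Fg n m x y).Adj (Sum.inr a) (Sum.inl b) ↔ b = x ∧ a = y := by
  simp [Fg, joinByEdge, fromRel_adj]

/-- the cut dart -/
def cutd : (Fg n m x y).Dart := ⟨(Sum.inl x, Sum.inr y), (Fg_adj_lr x y).mpr ⟨rfl, rfl⟩⟩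

lemma dart_cases (d : (Fg n m x y).Dart) :
    (∃ a b : Fin n, d.toProd = (Sum.inl a, Sum.inl b)) ∨
    (∃ a b : Fin m, d.toProd = (Sum.inr a, Sum.inr b)) ∨
    d = cutd x y ∨ d = (cutd x y).symm := by
  obtain ⟨⟨u, v⟩, hadj⟩ := d
  cases u with
  | inl a =>
    cases v with
    | inl b => exact Or.inl ⟨a, b, rfl⟩
    | inr b =>
      obtain ⟨rfl, rfl⟩ := (Fg_adj_lr x y).mp hadj
      exact Or.inr (Or.inr (Or.inl (SimpleGraph.Dart.ext _ _ rfl)))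
  | inr a =>
    cases v with
    | inl b =>
      obtain ⟨rfl, rfl⟩ := (Fg_adj_rl x y).mp hadj
      exact Or.inr (Or.inr (Or.inr (SimpleGraph.Dart.ext _ _ rfl)))
    | inr b => exact Or.inr (Or.inl ⟨a, b, rfl⟩)

/-- edge predicate on the join graph assembled from side predicates and a cut-edge flag -/
def PF (PL : Fin n → Fin n → Prop) (PR : Fin m → Fin m → Prop) (c : Bool)
    (x : Fin n) (y : Fin m) : Fin n ⊕ Fin m → Fin n ⊕ Fin m → Prop
  | Sum.inl a, Sum.inl b => PL a b
  | Sum.inr a, Sum.inr b => PR a b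
  | Sum.inl a, Sum.inr b => c = true ∧ a = x ∧ b = y
  | Sum.inr a, Sum.inl b => c = true ∧ a = y ∧ b = x

variable {PL : Fin n → Fin n → Prop} {PR : Fin m → Fin m → Prop} {c : Bool}

lemma PF_symm (hL : ∀ a b, PL a b → PL b a) (hR : ∀ a b, PR a b → PR b a) :
    ∀ u v, PF PL PR c x y u v → PF PL PR c x y v u := by
  rintro (a | a) (b | b) h
  · exact hL a b h
  · exact ⟨h.1, h.2.2, h.2.1⟩
  · exact ⟨h.1, h.2.2, h.2.1⟩
  · exact hR a b h

lemma PF_adj (hL : ∀ a b, PL a b → a ≠ b) (hR : ∀ a b, PR a b → a ≠ b) :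
    ∀ u v, PF PL PR c x y u v → (Fg n m x y).Adj u v := by
  rintro (a | a) (b | b) h
  · exact (Fg_adj_ll x y).mpr (hL a b h)
  · exact (Fg_adj_lr x y).mpr ⟨h.2.1, h.2.2⟩
  · exact (Fg_adj_rl x y).mpr ⟨h.2.2, h.2.1⟩
  · exact (Fg_adj_rr x y).mpr (hR a b h)

lemma countPF_left (a : Fin n) :
    {w : Fin n ⊕ Fin m | PF PL PR c x y (Sum.inl a) w}.ncard
      = {b | PL a b}.ncard + (if c = true ∧ a = x then 1 else 0) := by
  have hset : {w : Fin n ⊕ Fin m | PF PL PR c x y (Sum.inl a) w}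
      = (Sum.inl '' {b | PL a b}) ∪
        (if c = true ∧ a = x then {Sum.inr y} else (∅ : Set (Fin n ⊕ Fin m))) := by
    ext w
    cases w with
    | inl b =>
      simp only [Set.mem_setOf_eq, Set.mem_union, Set.mem_image]
      constructor
      · intro h
        exact Or.inl ⟨b, h, rfl⟩
      · rintro (⟨b', hb', hb⟩ | h)
        · obtain rfl : b' = b := Sum.inl.injEq b' b ▸ hb
          exact hb'
        · exfalso
          split_ifs at h with hc
          · simp at h
          · simp at h
    | inr b =>
      simp only [Set.mem_setOf_eq, Set.mem_union, Set.mem_image]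
      constructor
      · rintro ⟨h1, h2, h3⟩
        subst h3
        rw [if_pos ⟨h1, h2⟩]
        exact Or.inr rfl
      · rintro (⟨b', -, hb⟩ | h)
        · exact absurd hb (by simp)
        · split_ifs at h with hc
          · simp only [Set.mem_singleton_iff, Sum.inr.injEq] at h
            exact ⟨hc.1, hc.2, h⟩
          · simp at h
  rw [hset, Set.ncard_union_eq ?disj (Set.toFinite _) (Set.toFinite _),
    Set.ncard_image_of_injOn (Sum.inl_injective.injOn)]
  · congr 1
    split_ifs
    · exact Set.ncard_singleton _
    · exact Set.ncard_empty _
  case disj =>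
    rw [Set.disjoint_left]
    rintro w ⟨b', -, hb⟩ hw
    split_ifs at hw with hc
    · rw [Set.mem_singleton_iff] at hw
      rw [← hb] at hw
      simp at hw
    · simp at hw

lemma countPF_right (b : Fin m) :
    {w : Fin n ⊕ Fin m | PF PL PR c x y (Sum.inr b) w}.ncard
      = {a | PR b a}.ncard + (if c = true ∧ b = y then 1 else 0) := by
  have hset : {w : Fin n ⊕ Fin m | PF PL PR c x y (Sum.inr b) w}
      = (Sum.inr '' {a | PR b a}) ∪
        (if c = true ∧ b = y then {Sum.inl x} else (∅ : Set (Fin n ⊕ Fin m))) := by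
    ext w
    cases w with
    | inr a =>
      simp only [Set.mem_setOf_eq, Set.mem_union, Set.mem_image]
      constructor
      · intro h
        exact Or.inl ⟨a, h, rfl⟩
      · rintro (⟨a', ha', ha⟩ | h)
        · obtain rfl : a' = a := Sum.inr.injEq a' a ▸ ha
          exact ha'
        · exfalso
          split_ifs at h with hc
          · simp at h
          · simp at h
    | inl a =>
      simp only [Set.mem_setOf_eq, Set.mem_union, Set.mem_image]
      constructor
      · rintro ⟨h1, h2, h3⟩
        subst h3
        rw [if_pos ⟨h1, h2⟩]
        exact Or.inr rfl
      · rintro (⟨a', -, ha⟩ | h)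
        · exact absurd ha (by simp)
        · split_ifs at h with hc
          · simp only [Set.mem_singleton_iff, Sum.inl.injEq] at h
            exact ⟨hc.1, hc.2, h⟩
          · simp at h
  rw [hset, Set.ncard_union_eq ?disj (Set.toFinite _) (Set.toFinite _),
    Set.ncard_image_of_injOn (Sum.inr_injective.injOn)]
  · congr 1
    split_ifs
    · exact Set.ncard_singleton _
    · exact Set.ncard_empty _
  case disj =>
    rw [Set.disjoint_left]
    rintro w ⟨a', -, ha⟩ hw
    split_ifs at hw with hc
    · rw [Set.mem_singleton_iff] at hw
      rw [← ha] at hw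
      simp at hw
    · simp at hw

end JoinG


section JoinG2

variable {n m k : ℕ} [NeZero n] [NeZero m] (x : Fin n) (y : Fin m)

open Classical in
lemma ncard_inter_singleton {α : Type*} (S : Set α) (a : α) :
    (S ∩ {a}).ncard = if a ∈ S then 1 else 0 := by
  by_cases h : a ∈ S
  · rw [if_pos h]
    have : S ∩ {a} = {a} := by
      ext b; simp only [Set.mem_inter_iff, Set.mem_singleton_iff]
      constructor
      · rintro ⟨-, h2⟩; exact h2
      · rintro rfl; exact ⟨h, rfl⟩
    rw [this, Set.ncard_singleton]
  · rw [if_neg h]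
    have : S ∩ {a} = ∅ := by
      ext b; simp only [Set.mem_inter_iff, Set.mem_singleton_iff, Set.mem_empty_iff_false,
        iff_false, not_and]
      rintro hb rfl; exact h hb
    rw [this, Set.ncard_empty]

lemma exists_dart_Fg (hn : 2 ≤ n) (hm : 2 ≤ m) (u : Fin n ⊕ Fin m) :
    ∃ d : (Fg n m x y).Dart, d.fst = u := by
  cases u with
  | inl a =>
    obtain ⟨b, hb⟩ := Fintype.exists_ne_of_one_lt_card (by rw [Fintype.card_fin]; omega) a
    exact ⟨⟨(Sum.inl a, Sum.inl b), (Fg_adj_ll x y).mpr (Ne.symm hb)⟩, rfl⟩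
  | inr a =>
    obtain ⟨b, hb⟩ := Fintype.exists_ne_of_one_lt_card (by rw [Fintype.card_fin]; omega) a
    exact ⟨⟨(Sum.inr a, Sum.inr b), (Fg_adj_rr x y).mpr (Ne.symm hb)⟩, rfl⟩

lemma Fg_lower (hk : 2 ≤ k) (hn : 2 ≤ n) (hm : 2 ≤ m)
    (S : Set (Fg n m x y).Dart) (hS : IsKTDS (inflation (Fg n m x y)) k S) :
    k * (n + m) ≤ S.ncard := by
  classical
  rw [ncard_eq_sum]
  calc k * (n + m) = ∑ _w : Fin n ⊕ Fin m, k := by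
        rw [Finset.sum_const, smul_eq_mul, Finset.card_univ, Fintype.card_sum,
          Fintype.card_fin, Fintype.card_fin, mul_comm]
    _ ≤ _ := Finset.sum_le_sum fun w _ =>
        clique_lower k hk S hS w (exists_dart_Fg x y hn hm w)

lemma Fg_parity (S : Set (Fg n m x y).Dart)
    (hexact : ∀ w, (S ∩ X (Fg n m x y) w).ncard = k)
    (hsymm : ∀ d ∈ S, d.symm ∈ S) : (k * n) % 2 = (k * m) % 2 := by
  classical
  have hcutiff : (cutd x y ∈ S) ↔ ((cutd x y).symm ∈ S) := by
    constructor
    · exact fun h => hsymm _ h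
    · intro h
      have := hsymm _ h
      rwa [SimpleGraph.Dart.symm_symm] at this
  -- left side
  have hL : (S ∩ {d : (Fg n m x y).Dart |
      d.fst ∈ (Finset.univ.image Sum.inl : Finset (Fin n ⊕ Fin m))}).ncard = k * n := by
    rw [ncard_eq_sum_over,
      Finset.sum_image (fun a _ b _ h => Sum.inl_injective h),
      Finset.sum_congr rfl (fun a _ => hexact (Sum.inl a)),
      Finset.sum_const, smul_eq_mul, Finset.card_univ, Fintype.card_fin, mul_comm]
  have hR : (S ∩ {d : (Fg n m x y).Dart |
      d.fst ∈ (Finset.univ.image Sum.inr : Finset (Fin n ⊕ Fin m))}).ncard = k * m := by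
    rw [ncard_eq_sum_over,
      Finset.sum_image (fun a _ b _ h => Sum.inr_injective h),
      Finset.sum_congr rfl (fun a _ => hexact (Sum.inr a)),
      Finset.sum_const, smul_eq_mul, Finset.card_univ, Fintype.card_fin, mul_comm]
  set SL := S ∩ {d : (Fg n m x y).Dart | ∃ a b : Fin n, d.toProd = (Sum.inl a, Sum.inl b)}
    with hSL
  set SR := S ∩ {d : (Fg n m x y).Dart | ∃ a b : Fin m, d.toProd = (Sum.inr a, Sum.inr b)}
    with hSR
  have hdL : S ∩ {d : (Fg n m x y).Dart |
      d.fst ∈ (Finset.univ.image Sum.inl : Finset (Fin n ⊕ Fin m))}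
      = SL ∪ (S ∩ {cutd x y}) := by
    ext d
    simp only [hSL, Set.mem_inter_iff, Set.mem_setOf_eq, Set.mem_union, Finset.mem_image,
      Finset.mem_univ, true_and, Set.mem_singleton_iff]
    constructor
    · rintro ⟨hdS, a, ha⟩
      rcases dart_cases x y d with ⟨a', b', h⟩ | ⟨a', b', h⟩ | h | h
      · exact Or.inl ⟨hdS, a', b', h⟩
      · exfalso
        have : d.fst = Sum.inr a' := by rw [show d.fst = d.toProd.1 from rfl, h]
        rw [this] at ha
        exact Sum.inl_ne_inr ha
      · exact Or.inr ⟨hdS, h⟩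
      · exfalso
        have : d.fst = Sum.inr y := by
          rw [show d.fst = d.toProd.1 from rfl, h]
          rfl
        rw [this] at ha
        exact Sum.inl_ne_inr ha
    · rintro (⟨hdS, a, b, h⟩ | ⟨hdS, h⟩)
      · refine ⟨hdS, a, ?_⟩
        rw [show d.fst = d.toProd.1 from rfl, h]
      · refine ⟨hdS, x, ?_⟩
        rw [h]
        rfl
  have hdR : S ∩ {d : (Fg n m x y).Dart |
      d.fst ∈ (Finset.univ.image Sum.inr : Finset (Fin n ⊕ Fin m))}
      = SR ∪ (S ∩ {(cutd x y).symm}) := by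
    ext d
    simp only [hSR, Set.mem_inter_iff, Set.mem_setOf_eq, Set.mem_union, Finset.mem_image,
      Finset.mem_univ, true_and, Set.mem_singleton_iff]
    constructor
    · rintro ⟨hdS, a, ha⟩
      rcases dart_cases x y d with ⟨a', b', h⟩ | ⟨a', b', h⟩ | h | h
      · exfalso
        have : d.fst = Sum.inl a' := by rw [show d.fst = d.toProd.1 from rfl, h]
        rw [this] at ha
        exact Sum.inl_ne_inr ha.symm
      · exact Or.inl ⟨hdS, a', b', h⟩
      · exfalso
        have : d.fst = Sum.inl x := by
          rw [show d.fst = d.toProd.1 from rfl, h]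
          rfl
        rw [this] at ha
        exact Sum.inl_ne_inr ha.symm
      · exact Or.inr ⟨hdS, h⟩
    · rintro (⟨hdS, a, b, h⟩ | ⟨hdS, h⟩)
      · refine ⟨hdS, a, ?_⟩
        rw [show d.fst = d.toProd.1 from rfl, h]
      · refine ⟨hdS, y, ?_⟩
        rw [h]
        rfl
  have hdisjL : Disjoint SL (S ∩ {cutd x y}) := by
    rw [Set.disjoint_left]
    rintro d ⟨-, a, b, h⟩ ⟨-, h2⟩
    rw [Set.mem_singleton_iff] at h2
    subst h2
    have h2 : (Sum.inr y : Fin n ⊕ Fin m) = Sum.inl b := congrArg Prod.snd h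
    exact Sum.inl_ne_inr h2.symm
  have hdisjR : Disjoint SR (S ∩ {(cutd x y).symm}) := by
    rw [Set.disjoint_left]
    rintro d ⟨-, a, b, h⟩ ⟨-, h2⟩
    rw [Set.mem_singleton_iff] at h2
    subst h2
    have h2 : (Sum.inl x : Fin n ⊕ Fin m) = Sum.inr b := congrArg Prod.snd h
    exact Sum.inl_ne_inr h2
  rw [hdL, Set.ncard_union_eq hdisjL (Set.toFinite _) (Set.toFinite _),
    ncard_inter_singleton] at hL
  rw [hdR, Set.ncard_union_eq hdisjR (Set.toFinite _) (Set.toFinite _),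
    ncard_inter_singleton] at hR
  have hevL : Even SL.ncard := by
    apply even_ncard_symm_closed
    rintro d ⟨hdS, a, b, h⟩
    refine ⟨hsymm d hdS, b, a, ?_⟩
    rw [SimpleGraph.Dart.symm_toProd, h]
    rfl
  have hevR : Even SR.ncard := by
    apply even_ncard_symm_closed
    rintro d ⟨hdS, a, b, h⟩
    refine ⟨hsymm d hdS, b, a, ?_⟩
    rw [SimpleGraph.Dart.symm_toProd, h]
    rfl
  obtain ⟨c1, hc1⟩ := hevL
  obtain ⟨c2, hc2⟩ := hevR
  by_cases hcut : cutd x y ∈ S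
  · rw [if_pos hcut] at hL
    rw [if_pos (hcutiff.mp hcut)] at hR
    omega
  · rw [if_neg hcut] at hL
    rw [if_neg (fun h => hcut (hcutiff.mpr h))] at hR
    omega

lemma Fg_lower_mixed (hk : 2 ≤ k) (hn : 2 ≤ n) (hm : 2 ≤ m)
    (hpar : (k * n) % 2 ≠ (k * m) % 2)
    (S : Set (Fg n m x y).Dart) (hS : IsKTDS (inflation (Fg n m x y)) k S) :
    k * (n + m) + 1 ≤ S.ncard := by
  classical
  have h1 := Fg_lower x y hk hn hm S hS
  by_contra hcon
  push_neg at hcon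
  have hEq : S.ncard = k * (n + m) := by omega
  have hsum := ncard_eq_sum (G := Fg n m x y) S
  have hexact : ∀ w ∈ Finset.univ, (S ∩ X (Fg n m x y) w).ncard = k := by
    apply forall_eq_of_sum_le
    · exact fun w _ => clique_lower k hk S hS w (exists_dart_Fg x y hn hm w)
    · rw [← hsum, hEq, Finset.card_univ, Fintype.card_sum, Fintype.card_fin, Fintype.card_fin]
  have hsymm := symm_closed_of_exact k (by omega) S hS
      (fun w => (hexact w (Finset.mem_univ w)).le)
  exact hpar (Fg_parity x y S (fun w => hexact w (Finset.mem_univ w)) hsymm)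

end JoinG2


section JoinG3

variable {n m k : ℕ} [NeZero n] [NeZero m] (x : Fin n) (y : Fin m)
variable {PL : Fin n → Fin n → Prop} {PR : Fin m → Fin m → Prop} {c : Bool}

lemma Fg_build (hk1 : 1 ≤ k)
    (hLsymm : ∀ a b, PL a b → PL b a) (hRsymm : ∀ a b, PR a b → PR b a)
    (hLne : ∀ a b, PL a b → a ≠ b) (hRne : ∀ a b, PR a b → a ≠ b)
    (hcountL : ∀ a, k ≤ {b | PL a b}.ncard + (if c = true ∧ a = x then 1 else 0))
    (hcountR : ∀ b, k ≤ {a | PR b a}.ncard + (if c = true ∧ b = y then 1 else 0))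
    (T : ℕ)
    (hsum : (∑ a : Fin n, ({b | PL a b}.ncard + if c = true ∧ a = x then 1 else 0))
        + (∑ b : Fin m, ({a | PR b a}.ncard + if c = true ∧ b = y then 1 else 0)) = T) :
    ∃ S : Set (Fg n m x y).Dart, IsKTDS (inflation (Fg n m x y)) k S ∧ S.ncard = T := by
  classical
  set S : Set (Fg n m x y).Dart := {d | PF PL PR c x y d.fst d.snd} with hSdef
  have hadj := PF_adj x y (PL := PL) (PR := PR) (c := c) hLne hRne
  have hcnt : ∀ w : Fin n ⊕ Fin m,
      (S ∩ X (Fg n m x y) w).ncard = {v | PF PL PR c x y w v}.ncard := fun w =>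
    count_X_eq (fun u v h => hadj u v h) w
  refine ⟨S, ?_, ?_⟩
  · apply isKTDS_of_symm_closed k hk1
    · intro d hd
      have h2 := PF_symm x y hLsymm hRsymm d.fst d.snd hd
      show PF PL PR c x y d.symm.fst d.symm.snd
      rw [dart_symm_fst, dart_symm_snd]
      exact h2
    · intro w
      rw [hcnt w]
      cases w with
      | inl a => rw [countPF_left]; exact hcountL a
      | inr b => rw [countPF_right]; exact hcountR b
  · rw [ncard_eq_sum, Finset.sum_congr rfl (fun w _ => hcnt w)]
    rw [show (∑ w : Fin n ⊕ Fin m, {v | PF PL PR c x y w v}.ncard)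
        = (∑ a : Fin n, {v | PF PL PR c x y (Sum.inl a) v}.ncard)
          + (∑ b : Fin m, {v | PF PL PR c x y (Sum.inr b) v}.ncard) from
      Fintype.sum_sum_type _]
    rw [Finset.sum_congr rfl (fun a _ => countPF_left (x := x) (y := y) a),
      Finset.sum_congr rfl (fun b _ => countPF_right (x := x) (y := y) b)]
    exact hsum

lemma sum_count_false {P : Fin n → Fin n → Prop} {z : Fin n} :
    (∑ a : Fin n, ({b | P a b}.ncard + if (false : Bool) = true ∧ a = z then 1 else 0))
      = ∑ a : Fin n, {b | P a b}.ncard := by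
  refine Finset.sum_congr rfl fun a _ => ?_
  rw [if_neg (by simp), Nat.add_zero]

lemma sum_count_true {P : Fin n → Fin n → Prop} {z : Fin n} :
    (∑ a : Fin n, ({b | P a b}.ncard + if (true : Bool) = true ∧ a = z then 1 else 0))
      = (∑ a : Fin n, {b | P a b}.ncard) + 1 := by
  rw [Finset.sum_add_distrib]
  congr 1
  rw [Finset.sum_congr rfl (fun a _ => show (if (true : Bool) = true ∧ a = z then 1 else 0)
      = if a = z then 1 else 0 by simp), sum_ite_single]
  omega

lemma sumPcirc (hk : 2 ≤ k) (hkq : k < n) (h : ¬(k % 2 = 1 ∧ n % 2 = 1)) :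
    ∑ a : Fin n, {b | Pcirc k n a b}.ncard = k * n := by
  rw [Finset.sum_congr rfl (fun a _ => by
      rw [countPcirc hk hkq, card_Jbase hk hkq, if_neg h]),
    Finset.sum_const, smul_eq_mul, Finset.card_univ, Fintype.card_fin, mul_comm]

lemma Fg_upper (hk : 2 ≤ k) (hkn : k < n) (hkm : k < m) :
    ∃ S : Set (Fg n m x y).Dart, IsKTDS (inflation (Fg n m x y)) k S ∧
      S.ncard = k * (n + m) + (if (k * n) % 2 = (k * m) % 2 then 0 else 1) := by
  have hko2 : (k * n) % 2 = 1 ↔ (k % 2 = 1 ∧ n % 2 = 1) := by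
    rw [Nat.mul_mod]
    rcases Nat.mod_two_eq_zero_or_one k with h | h <;>
      rcases Nat.mod_two_eq_zero_or_one n with h2 | h2 <;> simp [h, h2]
  have hko3 : (k * m) % 2 = 1 ↔ (k % 2 = 1 ∧ m % 2 = 1) := by
    rw [Nat.mul_mod]
    rcases Nat.mod_two_eq_zero_or_one k with h | h <;>
      rcases Nat.mod_two_eq_zero_or_one m with h2 | h2 <;> simp [h, h2]
  by_cases hn1 : k % 2 = 1 ∧ n % 2 = 1 <;> by_cases hm1 : k % 2 = 1 ∧ m % 2 = 1
  · -- both odd : use deficient constructions plus the cut edge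
    have hpar : (k * n) % 2 = (k * m) % 2 := by
      have := hko2.mpr hn1; have := hko3.mpr hm1; omega
    rw [if_pos hpar, Nat.add_zero]
    refine Fg_build (c := true) (PL := PB k n x) (PR := PB k m y) x y (by omega) (fun a b => PB_symm hk hkn) (fun a b => PB_symm hk hkm)
      (fun a b => PB_ne hk hkn hn1.2) (fun a b => PB_ne hk hkm hm1.2) ?_ ?_ _ ?_
    · intro a
      rw [countPB hk hkn hn1.1 hn1.2]
      by_cases hax : a = x
      · rw [if_pos hax, if_pos ⟨rfl, hax⟩]; omega
      · rw [if_neg hax, if_neg (by tauto)]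
        omega
    · intro b
      rw [countPB hk hkm hm1.1 hm1.2]
      by_cases hby : b = y
      · rw [if_pos hby, if_pos ⟨rfl, hby⟩]; omega
      · rw [if_neg hby, if_neg (by tauto)]
        omega
    · rw [sum_count_true, sum_count_true, sumPB hk hkn hn1.1 hn1.2,
        sumPB hk hkm hm1.1 hm1.2]
      have h1 : k ≤ k * n := Nat.le_mul_of_pos_right _ (by omega)
      have h2 : k ≤ k * m := Nat.le_mul_of_pos_right _ (by omega)
      rw [Nat.mul_add]
      omega
  · -- kn odd, km even: PC on left, Pcirc on right
    have hpar : ¬ (k * n) % 2 = (k * m) % 2 := by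
      have := hko2.mpr hn1
      have h4 : ¬ (k*m) % 2 = 1 := fun hcc => hm1 (hko3.mp hcc)
      omega
    rw [if_neg hpar]
    refine Fg_build (c := false) (PL := PC k n x) (PR := Pcirc k m) x y (by omega) (fun a b => PC_symm hk hkn) (fun a b => Pcirc_symm hk hkm)
      (fun a b => PC_ne hk hkn hn1.2) (fun a b => Pcirc_ne hk hkm) ?_ ?_ _ ?_
    · intro a
      rw [countPC hk hkn hn1.1 hn1.2]
      by_cases h2 : a = x + ((k/2 + 1 : ℕ) : Fin n)
      · rw [if_pos h2]; omega
      · rw [if_neg h2]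
        rw [if_neg (by simp)]
        omega
    · intro b
      rw [countPcirc hk hkm, card_Jbase hk hkm, if_neg hm1, if_neg (by simp)]
      omega
    · rw [sum_count_false, sum_count_false, sumPC hk hkn hn1.1 hn1.2, sumPcirc hk hkm hm1,
        Nat.mul_add]
      omega
  · -- kn even, km odd
    have hpar : ¬ (k * n) % 2 = (k * m) % 2 := by
      have := hko3.mpr hm1
      have h4 : ¬ (k*n) % 2 = 1 := fun hcc => hn1 (hko2.mp hcc)
      omega
    rw [if_neg hpar]
    refine Fg_build (c := false) (PL := Pcirc k n) (PR := PC k m y) x y (by omega) (fun a b => Pcirc_symm hk hkn) (fun a b => PC_symm hk hkm)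
      (fun a b => Pcirc_ne hk hkn) (fun a b => PC_ne hk hkm hm1.2) ?_ ?_ _ ?_
    · intro a
      rw [countPcirc hk hkn, card_Jbase hk hkn, if_neg hn1, if_neg (by simp)]
      omega
    · intro b
      rw [countPC hk hkm hm1.1 hm1.2]
      by_cases h2 : b = y + ((k/2 + 1 : ℕ) : Fin m)
      · rw [if_pos h2]; omega
      · rw [if_neg h2]
        rw [if_neg (by simp)]
        omega
    · rw [sum_count_false, sum_count_false, sumPcirc hk hkn hn1, sumPC hk hkm hm1.1 hm1.2,
        Nat.mul_add]
      omega
  · -- both even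
    have hpar : (k * n) % 2 = (k * m) % 2 := by
      have h3 : ¬ (k*n) % 2 = 1 := fun hcc => hn1 (hko2.mp hcc)
      have h4 : ¬ (k*m) % 2 = 1 := fun hcc => hm1 (hko3.mp hcc)
      omega
    rw [if_pos hpar, Nat.add_zero]
    refine Fg_build (c := false) (PL := Pcirc k n) (PR := Pcirc k m) x y (by omega) (fun a b => Pcirc_symm hk hkn) (fun a b => Pcirc_symm hk hkm)
      (fun a b => Pcirc_ne hk hkn) (fun a b => Pcirc_ne hk hkm) ?_ ?_ _ ?_
    · intro a
      rw [countPcirc hk hkn, card_Jbase hk hkn, if_neg hn1, if_neg (by simp)]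
      omega
    · intro b
      rw [countPcirc hk hkm, card_Jbase hk hkm, if_neg hm1, if_neg (by simp)]
      omega
    · rw [sum_count_false, sum_count_false, sumPcirc hk hkn hn1, sumPcirc hk hkm hm1,
        Nat.mul_add]

theorem ktdn_Fg (hk : 2 ≤ k) (hkn : k < n) (hkm : k < m) :
    ktdn (inflation (Fg n m x y)) k
      = k * (n + m) + (if (k * n) % 2 = (k * m) % 2 then 0 else 1) := by
  by_cases hpar : (k * n) % 2 = (k * m) % 2
  · rw [if_pos hpar, Nat.add_zero]
    refine ktdn_eq _ _ _ ?_ (fun S hS => Fg_lower x y hk (by omega) (by omega) S hS)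
    have := Fg_upper x y hk hkn hkm
    rw [if_pos hpar, Nat.add_zero] at this
    exact this
  · rw [if_neg hpar]
    refine ktdn_eq _ _ _ ?_
      (fun S hS => Fg_lower_mixed x y hk (by omega) (by omega) hpar S hS)
    have := Fg_upper x y hk hkn hkm
    rw [if_neg hpar] at this
    exact this

end JoinG3

end Aux


/-- **Corollary (sharpness of the cut-edge bounds for complete graphs).** Let
`2 ≤ k < n ≤ m` and let `F` be obtained from the disjoint union of `G = K_n` and `H = K_m`
by adding a cut-edge. Then `γ_{×k,t}(F_I) = γ_{×k,t}(G_I) + γ_{×k,t}(H_I) - 2` if `k`, `m`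
and `n` are all odd, and `γ_{×k,t}(F_I) = γ_{×k,t}(G_I) + γ_{×k,t}(H_I)` otherwise. -/
theorem stmt12 (n m k : ℕ) (hk : 2 ≤ k) (hkn : k < n) (hnm : n ≤ m)
    (x : Fin n) (y : Fin m) :
    (Odd k ∧ Odd m ∧ Odd n →
      ktdn (inflation (joinByEdge (⊤ : SimpleGraph (Fin n)) (⊤ : SimpleGraph (Fin m)) x y)) k
          + 2
        = ktdn (inflation (⊤ : SimpleGraph (Fin n))) k
          + ktdn (inflation (⊤ : SimpleGraph (Fin m))) k) ∧
    (¬ (Odd k ∧ Odd m ∧ Odd n) →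
      ktdn (inflation (joinByEdge (⊤ : SimpleGraph (Fin n)) (⊤ : SimpleGraph (Fin m)) x y)) k
        = ktdn (inflation (⊤ : SimpleGraph (Fin n))) k
          + ktdn (inflation (⊤ : SimpleGraph (Fin m))) k) := by
  haveI : NeZero n := ⟨by omega⟩
  haveI : NeZero m := ⟨by omega⟩
  have hkm : k < m := lt_of_lt_of_le hkn hnm
  have hG := Aux.ktdn_Kq k n hk hkn
  have hH := Aux.ktdn_Kq k m hk hkm
  have hF := Aux.ktdn_Fg (k := k) x y hk hkn hkm
  rw [show Aux.Fg n m x y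
      = joinByEdge (⊤ : SimpleGraph (Fin n)) (⊤ : SimpleGraph (Fin m)) x y from rfl] at hF
  have hmul : k * (n + m) = k * n + k * m := Nat.mul_add k n m
  have p1 : (k * n) % 2 = 1 ↔ (k % 2 = 1 ∧ n % 2 = 1) := by
    rw [Nat.mul_mod]
    rcases Nat.mod_two_eq_zero_or_one k with h | h <;>
      rcases Nat.mod_two_eq_zero_or_one n with h2 | h2 <;> simp [h, h2]
  have p2 : (k * m) % 2 = 1 ↔ (k % 2 = 1 ∧ m % 2 = 1) := by
    rw [Nat.mul_mod]
    rcases Nat.mod_two_eq_zero_or_one k with h | h <;>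
      rcases Nat.mod_two_eq_zero_or_one m with h2 | h2 <;> simp [h, h2]
  constructor
  · rintro ⟨hk1, hm1, hn1⟩
    rw [Nat.odd_iff] at hk1 hm1 hn1
    rw [hF, hG, hH]
    split_ifs <;> omega
  · intro hnot
    have hnot' : ¬ (k % 2 = 1 ∧ m % 2 = 1 ∧ n % 2 = 1) := by
      rwa [Nat.odd_iff, Nat.odd_iff, Nat.odd_iff] at hnot
    rw [hF, hG, hH]
    split_ifs <;> omega
end

section
/- Let F be a graph with a cut-vertex v such that G^1, G^2, ..., G^m are all the v-components of F − v. If k is an integer with 2 ≤ k < min{δ(G^i) : 1 ≤ i ≤ m}, then Σ_{1≤i≤m} γ_{×k,t}(G^i_I) − m(k+1) + k ≤ γ_{×k,t}(F_I) ≤ Σ_{1≤i≤m} γ_{×k,t}(G^i_I). -/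
open SimpleGraph

/-! ### Auxiliary material for `stmt13` -/

section Stmt13Aux

open Set

lemma inflation_adj' {W : Type*} {H : SimpleGraph W} {d e : H.Dart} :
    (inflation H).Adj d e ↔ d ≠ e ∧ (d.toProd.1 = e.toProd.1 ∨ d.toProd = e.toProd.swap) := by
  rw [inflation, SimpleGraph.fromRel_adj]
  refine and_congr_right fun hne => ⟨?_, fun h => Or.inl h⟩
  rintro ((h | h) | (h | h))
  · exact Or.inl h
  · exact Or.inr h
  · exact Or.inl h.symm
  · exact Or.inr (by rw [h, Prod.swap_swap])

lemma inflation_clique_adj {W : Type*} {H : SimpleGraph W} {d e : H.Dart}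
    (h : d.toProd.1 = e.toProd.1) (hne : d ≠ e) : (inflation H).Adj d e :=
  inflation_adj'.mpr ⟨hne, Or.inl h⟩

lemma inflation_symm_adj {W : Type*} {H : SimpleGraph W} (d : H.Dart) :
    (inflation H).Adj d d.symm :=
  inflation_adj'.mpr ⟨(SimpleGraph.Dart.symm_ne d).symm, Or.inr (Prod.swap_swap d.toProd).symm⟩

lemma ktdn_le {W : Type*} {H : SimpleGraph W} {k : ℕ} {S : Set W} (h : IsKTDS H k S) :
    ktdn H k ≤ S.ncard :=
  Nat.sInf_le ⟨S, h, rfl⟩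

lemma ktdn_exists {W : Type*} {H : SimpleGraph W} {k : ℕ} (h : ∃ S, IsKTDS H k S) :
    ∃ S : Set W, IsKTDS H k S ∧ S.ncard = ktdn H k := by
  obtain ⟨S, hS⟩ := h
  exact Nat.sInf_mem (⟨S.ncard, S, hS, rfl⟩ :
    {n | ∃ S : Set W, IsKTDS H k S ∧ S.ncard = n}.Nonempty)

lemma ncard_biUnion_le {α ι : Type*} [Finite α] (s : Finset ι) (f : ι → Set α) :
    (⋃ i ∈ s, f i).ncard ≤ ∑ i ∈ s, (f i).ncard := by
  classical
  induction s using Finset.cons_induction with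
  | empty => simp
  | cons a s ha ih =>
    rw [Finset.cons_eq_insert, Finset.set_biUnion_insert, Finset.sum_insert ha]
    exact le_trans (Set.ncard_union_le _ _) (by omega)

lemma sum_ncard_le_of_disjoint {α ι : Type*} [Finite α] (s : Finset ι) (f : ι → Set α)
    (S : Set α) (hsub : ∀ i ∈ s, f i ⊆ S)
    (hdisj : ∀ i ∈ s, ∀ j ∈ s, i ≠ j → Disjoint (f i) (f j)) :
    ∑ i ∈ s, (f i).ncard ≤ S.ncard := by
  classical
  induction s using Finset.induction_on generalizing S with
  | empty => simp
  | @insert a s ha ih =>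
    rw [Finset.sum_insert ha]
    have hsub' : ∀ i ∈ s, f i ⊆ S \ f a := by
      intro i hi y hy
      refine ⟨hsub i (Finset.mem_insert_of_mem hi) hy, fun hy' => ?_⟩
      exact Set.disjoint_left.mp
        (hdisj i (Finset.mem_insert_of_mem hi) a (Finset.mem_insert_self a s)
          (fun hc => ha (hc ▸ hi))) hy hy'
    have h1 := ih (S \ f a) hsub'
      (fun i hi j hj hne => hdisj i (Finset.mem_insert_of_mem hi) j
        (Finset.mem_insert_of_mem hj) hne)
    have h2 : (f a).ncard ≤ S.ncard :=
      Set.ncard_le_ncard (hsub a (Finset.mem_insert_self a s)) (Set.toFinite S)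
    have h3 : (S \ f a).ncard = S.ncard - (f a).ncard :=
      Set.ncard_diff (hsub a (Finset.mem_insert_self a s)) (Set.toFinite _)
    omega

variable {m : ℕ} {V : Fin m → Type*} (G : ∀ i, SimpleGraph (V i)) (x : ∀ i, V i)

open Classical in
/-- Embedding of the vertices of `G i` into the vertex type of the wedge. -/
noncomputable def emb (i : Fin m) (u : V i) : Option (Σ i : Fin m, {u : V i // u ≠ x i}) :=
  if h : u = x i then none else some ⟨i, ⟨u, h⟩⟩

lemma emb_eq_none_iff {i : Fin m} {u : V i} : emb x i u = none ↔ u = x i := by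
  unfold emb; split_ifs with h <;> simp [h]

lemma emb_none (i : Fin m) : emb x i (x i) = none := by
  unfold emb; rw [dif_pos rfl]

lemma emb_some {i : Fin m} {u : V i} (h : u ≠ x i) :
    emb x i u = some ⟨i, ⟨u, h⟩⟩ := by
  unfold emb; rw [dif_neg h]

lemma emb_eq_cases {i j : Fin m} {a : V i} {b : V j} (h : emb x i a = emb x j b) :
    (a = x i ∧ b = x j) ∨ ∃ _ : i = j, HEq a b := by
  by_cases h1 : a = x i
  · by_cases h2 : b = x j
    · exact Or.inl ⟨h1, h2⟩
    · rw [h1, emb_none, emb_some x h2] at h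
      simp at h
  · by_cases h2 : b = x j
    · rw [h2, emb_none, emb_some x h1] at h
      simp at h
    · rw [emb_some x h1, emb_some x h2] at h
      obtain ⟨hij, hh⟩ := Sigma.ext_iff.mp (Option.some.inj h)
      subst hij
      exact Or.inr ⟨rfl, heq_of_eq (congrArg Subtype.val (eq_of_heq hh))⟩

lemma emb_inj (i : Fin m) : Function.Injective (emb x i) := by
  intro a b h
  rcases emb_eq_cases x h with ⟨h1, h2⟩ | ⟨_, h2⟩
  · rw [h1, h2]
  · exact eq_of_heq h2

lemma wedge_adj_emb {i : Fin m} {a b : V i} (h : (G i).Adj a b) :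
    (wedgeAt G x).Adj (emb x i a) (emb x i b) := by
  rw [wedgeAt, SimpleGraph.fromRel_adj]
  refine ⟨fun he => h.ne (emb_inj x i he), ?_⟩
  by_cases ha : a = x i
  · subst ha
    have hb : b ≠ x i := fun hb => h.ne hb.symm
    rw [emb_none, emb_some x hb]
    exact Or.inl h
  · by_cases hb : b = x i
    · subst hb
      rw [emb_none, emb_some x ha]
      exact Or.inr h.symm
    · rw [emb_some x ha, emb_some x hb]
      exact Or.inl ⟨rfl, h⟩

/-- Embedding of the darts of `G i` into the darts of the wedge. -/
noncomputable def psi (i : Fin m) (d : (G i).Dart) : (wedgeAt G x).Dart :=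
  ⟨(emb x i d.toProd.1, emb x i d.toProd.2), wedge_adj_emb G x d.adj⟩

lemma psi_inj_fix (i : Fin m) : Function.Injective (psi G x i) := by
  intro d e h
  have h1 : emb x i d.toProd.1 = emb x i e.toProd.1 := congrArg (fun w => w.toProd.1) h
  have h2 : emb x i d.toProd.2 = emb x i e.toProd.2 := congrArg (fun w => w.toProd.2) h
  exact SimpleGraph.Dart.ext _ _ (Prod.ext (emb_inj x i h1) (emb_inj x i h2))

lemma psi_comp_eq {i j : Fin m} {d : (G i).Dart} {e : (G j).Dart}
    (h : psi G x i d = psi G x j e) : i = j := by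
  have h1 : emb x i d.toProd.1 = emb x j e.toProd.1 := congrArg (fun w => w.toProd.1) h
  have h2 : emb x i d.toProd.2 = emb x j e.toProd.2 := congrArg (fun w => w.toProd.2) h
  rcases emb_eq_cases x h1 with ⟨hd, _⟩ | ⟨hij, _⟩
  · rcases emb_eq_cases x h2 with ⟨hd2, _⟩ | ⟨hij, _⟩
    · exact absurd (hd.trans hd2.symm) d.fst_ne_snd
    · exact hij
  · exact hij

lemma psi_surj (w : (wedgeAt G x).Dart) : ∃ i d, psi G x i d = w := by
  obtain ⟨⟨a, b⟩, hab⟩ := w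
  rw [wedgeAt, SimpleGraph.fromRel_adj] at hab
  obtain ⟨hne, hab⟩ := hab
  rcases a with _ | ⟨i, u, hu⟩ <;> rcases b with _ | ⟨j, w', hw⟩
  · exact absurd rfl hne
  · have hadj : (G j).Adj (x j) w' := by
      rcases hab with h | h
      · exact h
      · exact h.elim
    refine ⟨j, ⟨(x j, w'), hadj⟩, ?_⟩
    refine SimpleGraph.Dart.ext _ _ (Prod.ext ?_ ?_)
    · exact emb_none x j
    · exact emb_some x hw
  · have hadj : (G i).Adj (x i) u := by
      rcases hab with h | h
      · exact h.elim
      · exact h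
    refine ⟨i, ⟨(u, x i), hadj.symm⟩, ?_⟩
    refine SimpleGraph.Dart.ext _ _ (Prod.ext ?_ ?_)
    · exact emb_some x hu
    · exact emb_none x i
  · rcases hab with ⟨hij, hadj⟩ | ⟨hij, hadj⟩
    · subst hij
      refine ⟨i, ⟨(u, w'), hadj⟩, ?_⟩
      refine SimpleGraph.Dart.ext _ _ (Prod.ext ?_ ?_)
      · exact emb_some x hu
      · exact emb_some x hw
    · subst hij
      refine ⟨j, ⟨(u, w'), hadj.symm⟩, ?_⟩
      refine SimpleGraph.Dart.ext _ _ (Prod.ext ?_ ?_)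
      · exact emb_some x hu
      · exact emb_some x hw

lemma psi_inflation_hom {i : Fin m} {d e : (G i).Dart}
    (h : (inflation (G i)).Adj d e) :
    (inflation (wedgeAt G x)).Adj (psi G x i d) (psi G x i e) := by
  rw [inflation_adj'] at h ⊢
  obtain ⟨hne, h⟩ := h
  refine ⟨fun hc => hne (psi_inj_fix G x i hc), ?_⟩
  rcases h with h | h
  · exact Or.inl (congrArg (emb x i) h)
  · refine Or.inr (Prod.ext ?_ ?_)
    · exact congrArg (emb x i) (congrArg Prod.fst h)
    · exact congrArg (emb x i) (congrArg Prod.snd h)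

lemma psi_inflation_reflect {i : Fin m} {d : (G i).Dart} (hd : d.toProd.1 ≠ x i)
    {w : (wedgeAt G x).Dart} (h : (inflation (wedgeAt G x)).Adj (psi G x i d) w) :
    ∃ e, (inflation (G i)).Adj d e ∧ psi G x i e = w := by
  obtain ⟨j, e, rfl⟩ := psi_surj G x w
  rw [inflation_adj'] at h
  obtain ⟨hne, h | h⟩ := h
  · rcases emb_eq_cases x h with ⟨h1, _⟩ | ⟨rfl, h2⟩
    · exact absurd h1 hd
    · refine ⟨e, inflation_adj'.mpr ⟨fun hc => hne (congrArg _ hc), Or.inl (eq_of_heq h2)⟩, rfl⟩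
  · have h1 : emb x i d.toProd.1 = emb x j e.toProd.2 := congrArg Prod.fst h
    have h2 : emb x i d.toProd.2 = emb x j e.toProd.1 := congrArg Prod.snd h
    rcases emb_eq_cases x h1 with ⟨hc, _⟩ | ⟨rfl, hh1⟩
    · exact absurd hc hd
    · have e1 : d.toProd.1 = e.toProd.2 := eq_of_heq hh1
      have e2 : d.toProd.2 = e.toProd.1 := by
        rcases emb_eq_cases x h2 with ⟨hc1, hc2⟩ | ⟨_, hh2⟩
        · rw [hc1, hc2]
        · exact eq_of_heq hh2
      refine ⟨e, inflation_adj'.mpr ⟨?_, Or.inr (Prod.ext e1 e2)⟩, rfl⟩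
      intro hc
      rw [hc] at e1
      exact e.fst_ne_snd e1

variable [∀ i, Fintype (V i)] [∀ i, DecidableRel (G i).Adj]

lemma ncard_neighborSet_eq_degree' (i : Fin m) (u : V i) :
    ((G i).neighborSet u).ncard = (G i).degree u := by
  rw [Set.ncard_eq_toFinset_card', Set.toFinset_card,
    SimpleGraph.card_neighborSet_eq_degree]

lemma ncard_fiber (i : Fin m) (u : V i) :
    {e : (G i).Dart | e.toProd.1 = u}.ncard = (G i).degree u := by
  have hinj : Set.InjOn (fun e : (G i).Dart => e.toProd.2)
      {e : (G i).Dart | e.toProd.1 = u} := by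
    intro a ha b hb hab
    exact SimpleGraph.Dart.ext _ _ (Prod.ext (ha.trans hb.symm) hab)
  have himg : (fun e : (G i).Dart => e.toProd.2) '' {e : (G i).Dart | e.toProd.1 = u}
      = (G i).neighborSet u := by
    ext b
    constructor
    · rintro ⟨e, he, rfl⟩
      exact he ▸ e.adj
    · intro hb
      exact ⟨⟨(u, b), hb⟩, rfl, rfl⟩
  rw [← ncard_neighborSet_eq_degree' G i u, ← himg, Set.ncard_image_of_injOn hinj]

instance {α : Type*} [Finite α] : Finite (Option α) := by
  have e := Equiv.optionEquivSumPUnit.{0, _} α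
  exact Finite.of_equiv _ e.symm

instance : Finite ((wedgeAt G x).Dart) :=
  Finite.of_injective _ SimpleGraph.Dart.toProd_injective

lemma k_le_ncard_inflation_nbhd {k : ℕ} (i : Fin m) (hδi : k < (G i).minDegree)
    (d : (G i).Dart) : k ≤ ((inflation (G i)).neighborSet d).ncard := by
  classical
  have hsub : {e : (G i).Dart | e.toProd.1 = d.toProd.1} \ {d}
      ⊆ (inflation (G i)).neighborSet d := by
    rintro e ⟨he, hne⟩
    exact inflation_clique_adj (he.symm)
      (fun hc => hne (Set.mem_singleton_iff.mpr hc.symm))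
  have h1 : k + 1 ≤ {e : (G i).Dart | e.toProd.1 = d.toProd.1}.ncard := by
    rw [ncard_fiber]
    have := lt_of_lt_of_le hδi (SimpleGraph.minDegree_le_degree (G i) d.toProd.1)
    omega
  have h2 : {e : (G i).Dart | e.toProd.1 = d.toProd.1}.ncard
      ≤ ({e : (G i).Dart | e.toProd.1 = d.toProd.1} \ {d}).ncard + 1 := by
    calc {e : (G i).Dart | e.toProd.1 = d.toProd.1}.ncard
        ≤ (({e : (G i).Dart | e.toProd.1 = d.toProd.1} \ {d}) ∪ {d}).ncard := by
          refine Set.ncard_le_ncard (fun y hy => ?_) (Set.toFinite _)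
          by_cases hyd : y = d
          · exact Or.inr hyd
          · exact Or.inl ⟨hy, hyd⟩
      _ ≤ ({e : (G i).Dart | e.toProd.1 = d.toProd.1} \ {d}).ncard
            + ({d} : Set ((G i).Dart)).ncard := Set.ncard_union_le _ _
      _ = _ + 1 := by rw [Set.ncard_singleton]
  have h3 := Set.ncard_le_ncard hsub (Set.toFinite _)
  omega

lemma univ_ktds_comp {k : ℕ} (i : Fin m) (hδi : k < (G i).minDegree) :
    IsKTDS (inflation (G i)) k Set.univ := fun d => by
  rw [Set.univ_inter]
  exact k_le_ncard_inflation_nbhd G i hδi d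

lemma psi_image_nbhd_subset {i : Fin m} (d : (G i).Dart) :
    psi G x i '' ((inflation (G i)).neighborSet d)
      ⊆ (inflation (wedgeAt G x)).neighborSet (psi G x i d) := by
  rintro _ ⟨e, he, rfl⟩
  exact psi_inflation_hom G x he

lemma univ_ktds_wedge {k : ℕ} (hδ : ∀ i, k < (G i).minDegree) :
    IsKTDS (inflation (wedgeAt G x)) k Set.univ := fun w => by
  obtain ⟨j, d, rfl⟩ := psi_surj G x w
  rw [Set.univ_inter]
  calc k ≤ ((inflation (G j)).neighborSet d).ncard :=
        k_le_ncard_inflation_nbhd G j (hδ j) d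
    _ = (psi G x j '' ((inflation (G j)).neighborSet d)).ncard :=
        (Set.ncard_image_of_injective _ (psi_inj_fix G x j)).symm
    _ ≤ _ := Set.ncard_le_ncard (psi_image_nbhd_subset G x d) (Set.toFinite _)

end Stmt13Aux

/-- **Theorem (cut-vertex bounds).** Let `F` be a graph with a cut-vertex `v` whose
`v`-components are `G^1, …, G^m` (here `F = wedgeAt G x` is the graph obtained by gluing
the connected graphs `G i` at the vertices `x i`, identified to the cut-vertex `v`).
If `2 ≤ k < min {δ(G^i)}`, then
`Σ γ_{×k,t}(G^i_I) - m(k+1) + k ≤ γ_{×k,t}(F_I) ≤ Σ γ_{×k,t}(G^i_I)`. -/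
theorem stmt13 (m : ℕ) (hm : 2 ≤ m) {V : Fin m → Type*} [∀ i, Fintype (V i)]
    (G : ∀ i, SimpleGraph (V i)) [∀ i, DecidableRel (G i).Adj] (x : ∀ i, V i)
    (hconn : ∀ i, (G i).Connected) (k : ℕ) (hk : 2 ≤ k)
    (hδ : ∀ i, k < (G i).minDegree) :
    (∑ i, ktdn (inflation (G i)) k) + k ≤ ktdn (inflation (wedgeAt G x)) k + m * (k + 1) ∧
      ktdn (inflation (wedgeAt G x)) k ≤ ∑ i, ktdn (inflation (G i)) k := by
  classical
  -- ### Upper bound ###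
  have hex : ∀ i, ∃ S, IsKTDS (inflation (G i)) k S ∧ S.ncard = ktdn (inflation (G i)) k :=
    fun i => ktdn_exists ⟨Set.univ, univ_ktds_comp G i (hδ i)⟩
  choose S₀ hS₀ hS₀card using hex
  have hKTDSbig : IsKTDS (inflation (wedgeAt G x)) k (⋃ i, psi G x i '' S₀ i) := by
    intro w
    obtain ⟨j, d, rfl⟩ := psi_surj G x w
    have hsub : psi G x j '' (S₀ j ∩ (inflation (G j)).neighborSet d)
        ⊆ (⋃ i, psi G x i '' S₀ i) ∩
            (inflation (wedgeAt G x)).neighborSet (psi G x j d) := by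
      rintro _ ⟨e, ⟨heS, heN⟩, rfl⟩
      exact ⟨Set.mem_iUnion.mpr ⟨j, Set.mem_image_of_mem _ heS⟩, psi_inflation_hom G x heN⟩
    calc k ≤ (S₀ j ∩ (inflation (G j)).neighborSet d).ncard := hS₀ j d
      _ = (psi G x j '' (S₀ j ∩ (inflation (G j)).neighborSet d)).ncard :=
          (Set.ncard_image_of_injective _ (psi_inj_fix G x j)).symm
      _ ≤ _ := Set.ncard_le_ncard hsub (Set.toFinite _)
  have hupper : ktdn (inflation (wedgeAt G x)) k ≤ ∑ i, ktdn (inflation (G i)) k := by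
    refine le_trans (ktdn_le hKTDSbig) ?_
    have h1 : (⋃ i, psi G x i '' S₀ i)
        = ⋃ i ∈ (Finset.univ : Finset (Fin m)), psi G x i '' S₀ i := by simp
    rw [h1]
    refine le_trans (ncard_biUnion_le _ _) (Finset.sum_le_sum fun i _ => ?_)
    rw [Set.ncard_image_of_injective _ (psi_inj_fix G x i), hS₀card i]
  -- ### Lower bound ###
  obtain ⟨S, hSk, hScrd⟩ := ktdn_exists ⟨Set.univ, univ_ktds_wedge G x hδ⟩
  set Xi : ∀ i, Set ((G i).Dart) := fun i => {e | e.toProd.1 = x i} with hXi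
  set Si' : ∀ i, Set ((G i).Dart) := fun i => psi G x i ⁻¹' S with hSi'
  set si : Fin m → ℕ := fun i => (Si' i ∩ Xi i).ncard with hsi
  have hXcard : ∀ i, k + 1 ≤ (Xi i).ncard := by
    intro i
    have h0 : (Xi i).ncard = (G i).degree (x i) := ncard_fiber G i (x i)
    have h1 : k < (G i).degree (x i) :=
      lt_of_lt_of_le (hδ i) (SimpleGraph.minDegree_le_degree (G i) (x i))
    omega
  have hTex : ∀ i, ∃ T, (Si' i ∩ Xi i) ⊆ T ∧ T ⊆ Xi i ∧ T.ncard = max (k+1) (si i) :=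
    fun i => Set.exists_subsuperset_card_eq Set.inter_subset_right (le_max_right _ _)
      (max_le (hXcard i) (Set.ncard_le_ncard Set.inter_subset_right (Set.toFinite _)))
  choose T hT1 hT2 hT3 using hTex
  have hKi : ∀ i, IsKTDS (inflation (G i)) k (Si' i ∪ T i) := by
    intro i d
    by_cases hd : d.toProd.1 = x i
    · have hsub : T i \ {d} ⊆ (Si' i ∪ T i) ∩ (inflation (G i)).neighborSet d := by
        rintro e ⟨heT, hne⟩
        refine ⟨Or.inr heT, ?_⟩
        exact inflation_clique_adj (hd.trans (hT2 i heT).symm)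
          (fun hde => hne (Set.mem_singleton_iff.mpr hde.symm))
      have hTd : (T i).ncard ≤ (T i \ {d}).ncard + 1 := by
        calc (T i).ncard ≤ ((T i \ {d}) ∪ {d}).ncard := by
              refine Set.ncard_le_ncard (fun y hy => ?_) (Set.toFinite _)
              by_cases hyd : y = d
              · exact Or.inr hyd
              · exact Or.inl ⟨hy, hyd⟩
          _ ≤ (T i \ {d}).ncard + ({d} : Set ((G i).Dart)).ncard := Set.ncard_union_le _ _
          _ = (T i \ {d}).ncard + 1 := by rw [Set.ncard_singleton]
      have h2 := Set.ncard_le_ncard hsub (Set.toFinite _)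
      have h3 : k + 1 ≤ (T i).ncard := by rw [hT3 i]; exact le_max_left _ _
      omega
    · have hk' := hSk (psi G x i d)
      have hsub : S ∩ (inflation (wedgeAt G x)).neighborSet (psi G x i d)
          ⊆ psi G x i '' (Si' i ∩ (inflation (G i)).neighborSet d) := by
        rintro w ⟨hwS, hwN⟩
        obtain ⟨e, he, rfl⟩ := psi_inflation_reflect G x hd hwN
        exact ⟨e, ⟨hwS, he⟩, rfl⟩
      calc k ≤ (S ∩ (inflation (wedgeAt G x)).neighborSet (psi G x i d)).ncard := hk'
        _ ≤ (psi G x i '' (Si' i ∩ (inflation (G i)).neighborSet d)).ncard :=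
            Set.ncard_le_ncard hsub (Set.toFinite _)
        _ = (Si' i ∩ (inflation (G i)).neighborSet d).ncard :=
            Set.ncard_image_of_injective _ (psi_inj_fix G x i)
        _ ≤ ((Si' i ∪ T i) ∩ (inflation (G i)).neighborSet d).ncard :=
            Set.ncard_le_ncard
              (Set.inter_subset_inter_left _ Set.subset_union_left) (Set.toFinite _)
  have hsz : ∀ i, (Si' i ∪ T i).ncard ≤ (Si' i).ncard + ((k+1) - min (k+1) (si i)) := by
    intro i
    have hsub : Si' i ∪ T i ⊆ Si' i ∪ (T i \ (Si' i ∩ Xi i)) := by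
      intro y hy
      rcases hy with hy | hy
      · exact Or.inl hy
      · by_cases hyS : y ∈ Si' i
        · exact Or.inl hyS
        · exact Or.inr ⟨hy, fun hc => hyS hc.1⟩
    have hd1 : (T i \ (Si' i ∩ Xi i)).ncard = (T i).ncard - si i :=
      Set.ncard_diff (hT1 i) (Set.toFinite _)
    calc (Si' i ∪ T i).ncard ≤ (Si' i ∪ (T i \ (Si' i ∩ Xi i))).ncard :=
          Set.ncard_le_ncard hsub (Set.toFinite _)
      _ ≤ (Si' i).ncard + (T i \ (Si' i ∩ Xi i)).ncard := Set.ncard_union_le _ _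
      _ = (Si' i).ncard + ((T i).ncard - si i) := by rw [hd1]
      _ = (Si' i).ncard + ((k+1) - min (k+1) (si i)) := by rw [hT3 i]; congr 1; omega
  have hsum1 : ∑ i, (Si' i).ncard ≤ S.ncard := by
    refine le_trans (le_of_eq ?_)
      (sum_ncard_le_of_disjoint Finset.univ (fun i => psi G x i '' Si' i) S ?_ ?_)
    · exact Finset.sum_congr rfl fun i _ =>
        (Set.ncard_image_of_injective _ (psi_inj_fix G x i)).symm
    · rintro i - _ ⟨e, he, rfl⟩
      exact he
    · rintro i - j - hij
      rw [Set.disjoint_left]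
      rintro _ ⟨e, -, rfl⟩ ⟨f, -, hf⟩
      exact hij ((psi_comp_eq G x hf).symm)
  set Xv : Set ((wedgeAt G x).Dart) := {w | w.toProd.1 = none} with hXv
  have hXvnb : ∀ d ∈ Xv, S ∩ (inflation (wedgeAt G x)).neighborSet d
      ⊆ ((S ∩ Xv) \ {d}) ∪ {d.symm} := by
    rintro d hd e ⟨heS, heN⟩
    rw [SimpleGraph.mem_neighborSet, inflation_adj'] at heN
    obtain ⟨hne, h | h⟩ := heN
    · exact Or.inl ⟨⟨heS, h.symm.trans hd⟩,
        fun hc => hne (Set.mem_singleton_iff.mp hc).symm⟩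
    · refine Or.inr (Set.mem_singleton_iff.mpr ?_)
      refine SimpleGraph.Dart.ext _ _ ?_
      show e.toProd = d.toProd.swap
      rw [h, Prod.swap_swap]
  have hXvnonempty : Xv.Nonempty := by
    have h0 : (0:ℕ) < m := by omega
    have hdeg : 0 < ((G ⟨0, h0⟩).neighborSet (x ⟨0, h0⟩)).ncard := by
      rw [ncard_neighborSet_eq_degree']
      have h1 : k < (G ⟨0, h0⟩).degree (x ⟨0, h0⟩) :=
        lt_of_lt_of_le (hδ ⟨0, h0⟩) (SimpleGraph.minDegree_le_degree _ _)
      omega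
    obtain ⟨b, hb⟩ := Set.nonempty_of_ncard_ne_zero hdeg.ne'
    exact ⟨psi G x ⟨0, h0⟩ ⟨(x ⟨0, h0⟩, b), hb⟩, emb_none x ⟨0, h0⟩⟩
  have hSXv : k ≤ (S ∩ Xv).ncard := by
    rcases Set.eq_empty_or_nonempty (S ∩ Xv) with hE | ⟨d, hd⟩
    · obtain ⟨d, hd⟩ := hXvnonempty
      have h1 := hSk d
      have h2 := Set.ncard_le_ncard (hXvnb d hd) (Set.toFinite _)
      rw [hE] at h2
      have h3 : (((∅ : Set ((wedgeAt G x).Dart)) \ {d}) ∪ {d.symm}).ncard = 1 := by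
        rw [Set.empty_diff, Set.empty_union, Set.ncard_singleton]
      omega
    · have h2 := Set.ncard_le_ncard (hXvnb d hd.2) (Set.toFinite _)
      have h3 := le_trans (hSk d) h2
      have h4 : (((S ∩ Xv) \ {d}) ∪ {d.symm}).ncard ≤ ((S ∩ Xv) \ {d}).ncard + 1 := by
        refine le_trans (Set.ncard_union_le _ _) ?_
        rw [Set.ncard_singleton]
      have h5 : ((S ∩ Xv) \ {d}).ncard = (S ∩ Xv).ncard - 1 :=
        Set.ncard_diff_singleton_of_mem hd
      have h6 : 0 < (S ∩ Xv).ncard := (Set.ncard_pos (Set.toFinite _)).mpr ⟨d, hd⟩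
      omega
  have hsum2 : k ≤ ∑ i, si i := by
    have hsub : S ∩ Xv ⊆ ⋃ i ∈ (Finset.univ : Finset (Fin m)),
        psi G x i '' (Si' i ∩ Xi i) := by
      rintro w ⟨hwS, hwX⟩
      obtain ⟨j, e, rfl⟩ := psi_surj G x w
      have he1 : e ∈ Si' j := hwS
      have he2 : e ∈ Xi j := by
        have hnone : emb x j e.toProd.1 = none := hwX
        exact (emb_eq_none_iff (x := x)).mp hnone
      simp only [Set.mem_iUnion]
      exact ⟨j, Finset.mem_univ j, ⟨e, ⟨he1, he2⟩, rfl⟩⟩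
    calc k ≤ (S ∩ Xv).ncard := hSXv
      _ ≤ (⋃ i ∈ (Finset.univ : Finset (Fin m)), psi G x i '' (Si' i ∩ Xi i)).ncard :=
          Set.ncard_le_ncard hsub (Set.toFinite _)
      _ ≤ ∑ i, (psi G x i '' (Si' i ∩ Xi i)).ncard := ncard_biUnion_le _ _
      _ = ∑ i, si i := Finset.sum_congr rfl fun i _ =>
          Set.ncard_image_of_injective _ (psi_inj_fix G x i)
  have hminsum : k ≤ ∑ i, min (k+1) (si i) := by
    by_cases hexi : ∃ i, k + 1 ≤ si i
    · obtain ⟨i, hi⟩ := hexi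
      have hmini : min (k+1) (si i) = k+1 := min_eq_left hi
      calc k ≤ k + 1 := by omega
        _ = min (k+1) (si i) := hmini.symm
        _ ≤ ∑ i, min (k+1) (si i) :=
            Finset.single_le_sum (f := fun j => min (k+1) (si j))
              (fun j _ => Nat.zero_le _) (Finset.mem_univ i)
    · push_neg at hexi
      have heq : ∑ i, min (k+1) (si i) = ∑ i, si i :=
        Finset.sum_congr rfl fun i _ => min_eq_right (by have := hexi i; omega)
      omega
  have hA : ∑ i, ktdn (inflation (G i)) k
      ≤ ∑ i, ((Si' i).ncard + ((k+1) - min (k+1) (si i))) :=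
    Finset.sum_le_sum fun i _ => le_trans (ktdn_le (hKi i)) (hsz i)
  rw [Finset.sum_add_distrib] at hA
  have hB : (∑ i, ((k+1) - min (k+1) (si i))) + ∑ i, min (k+1) (si i) = m * (k+1) := by
    rw [← Finset.sum_add_distrib]
    have hterm : ∀ i ∈ Finset.univ, ((k+1) - min (k+1) (si i)) + min (k+1) (si i) = k+1 :=
      fun i _ => by omega
    rw [Finset.sum_congr rfl hterm, Finset.sum_const, Finset.card_univ,
      Fintype.card_fin, smul_eq_mul]
  exact ⟨by omega, hupper⟩
end
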